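/- arXiv:1109.4986 — 4 statements merged into one kernel-verified Lean document; each statement's English description precedes it below -/
import Mathlib

section
/- Let 0 ≤ ℓ ≤ m, let i_1,…,i_ℓ ∈ {0,…,k} and i_{ℓ+1},…,i_m ∈ {k+1,…,2k}, and set a = i_1+⋯+i_m and b = i_1+⋯+i_ℓ + k(m−ℓ). Then in R: if ℓ = m, the product x_{i_1}⋯x_{i_m} equals u^a; and if ℓ < m (so that a ≥ k+1), the product x_{i_1}⋯x_{i_ℓ}·y_{i_{ℓ+1}}⋯y_{i_m} equals u^a + (a−b)·u^{a−k−1}·ε. (Ribbon Product Lemma, Lemma 3.4.) -/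
/-!
Ribbon Product Lemma (Lemma 3.4).  We work in `R = ℂ[u][ε]/(ε²)`, modeled as
`DualNumber (Polynomial ℂ)`.  The variables are `x i = u^i` (for `0 ≤ i ≤ k`) and
`y j = u^j + (j-k)·u^(j-k-1)·ε` (for `k+1 ≤ j ≤ 2k`).
-/

noncomputable section

/-- The ring `ℂ[u][ε]/(ε²)`. -/
abbrev RibR : Type := DualNumber (Polynomial ℂ)

/-- The polynomial variable `u`. -/
def uPoly : Polynomial ℂ := Polynomial.X

/-- `x_i := u^i`. -/
def xvar (i : ℕ) : RibR := TrivSqZeroExt.inl (uPoly ^ i)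

/-- `y_j := u^j + (j-k)·u^(j-k-1)·ε` (intended for `k+1 ≤ j ≤ 2k`, i.e. `y_{k+i}
with `i = j - k`). -/
def yvar (k j : ℕ) : RibR :=
  TrivSqZeroExt.inl (uPoly ^ j) +
    TrivSqZeroExt.inr (((j - k : ℕ) : Polynomial ℂ) * uPoly ^ (j - k - 1))

open TrivSqZeroExt

lemma ribbon_aux {A : Type*} [CommRing A] {ι : Type*} [DecidableEq ι] (s : Finset ι)
    (f g : ι → A) :
    (∏ t ∈ s, (inl (f t) + inr (g t) : DualNumber A)) =
      inl (∏ t ∈ s, f t) +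
        inr (∑ t ∈ s, (∏ r ∈ s.erase t, f r) * g t) := by
  induction s using Finset.induction_on with
  | empty => simp
  | @insert a s ha ih =>
    have herase : ∀ t ∈ s, (insert a s).erase t = insert a (s.erase t) := by
      intro t ht
      rw [Finset.erase_insert_of_ne]
      rintro rfl; exact ha ht
    have hsum : ∑ t ∈ insert a s, (∏ r ∈ (insert a s).erase t, f r) * g t =
        (∏ r ∈ s, f r) * g a + f a * ∑ t ∈ s, (∏ r ∈ s.erase t, f r) * g t := by
      rw [Finset.sum_insert ha, Finset.erase_insert ha, Finset.mul_sum]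
      congr 1
      refine Finset.sum_congr rfl fun t ht => ?_
      rw [herase t ht, Finset.prod_insert (fun h => ha (Finset.mem_of_mem_erase h))]
      ring
    rw [Finset.prod_insert ha, ih, Finset.prod_insert ha, hsum]
    ext
    · simp
    · simp only [snd_mul, fst_add, snd_add, fst_inl, snd_inl, fst_inr, snd_inr,
        smul_eq_mul, op_smul_eq_smul, zero_add, add_zero]
      ring

/-- **Ribbon Product Lemma.**  If `i₁,…,i_ℓ ∈ {0,…,k}` and `i_{ℓ+1},…,i_m ∈ {k+1,…,2k}`,
and `a = i₁+⋯+i_m`, `b = i₁+⋯+i_ℓ + k(m-ℓ)`, then the product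
`x_{i₁}⋯x_{i_ℓ}·y_{i_{ℓ+1}}⋯y_{i_m}` equals `u^a` when `ℓ = m`, and equals
`u^a + (a-b)·u^(a-k-1)·ε` (with `a ≥ k+1`) when `ℓ < m`. -/
theorem ribbon_product_lemma (k : ℕ) (hk : 1 ≤ k) (m ℓ : ℕ) (hℓm : ℓ ≤ m)
    (i : Fin m → ℕ)
    (hx : ∀ t : Fin m, (t : ℕ) < ℓ → i t ≤ k)
    (hy : ∀ t : Fin m, ℓ ≤ (t : ℕ) → k + 1 ≤ i t ∧ i t ≤ 2 * k)
    (a b : ℕ)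
    (ha : a = ∑ t, i t)
    (hb : b = (∑ t ∈ Finset.univ.filter (fun t : Fin m => (t : ℕ) < ℓ), i t) + k * (m - ℓ)) :
    (ℓ = m →
      (∏ t : Fin m, if (t : ℕ) < ℓ then xvar (i t) else yvar k (i t)) =
        TrivSqZeroExt.inl (uPoly ^ a)) ∧
    (ℓ < m →
      k + 1 ≤ a ∧
      (∏ t : Fin m, if (t : ℕ) < ℓ then xvar (i t) else yvar k (i t)) =
        TrivSqZeroExt.inl (uPoly ^ a) +
          TrivSqZeroExt.inr (((a - b : ℕ) : Polynomial ℂ) * uPoly ^ (a - k - 1))) := by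
  classical
  set g : Fin m → Polynomial ℂ := fun t =>
    if (t : ℕ) < ℓ then 0 else ((i t - k : ℕ) : Polynomial ℂ) * uPoly ^ (i t - k - 1) with hg
  have hfactor : ∀ t : Fin m,
      (if (t : ℕ) < ℓ then xvar (i t) else yvar k (i t)) =
        inl (uPoly ^ (i t)) + inr (g t) := by
    intro t
    by_cases h : (t : ℕ) < ℓ <;> simp [xvar, yvar, hg, h]
  have hfst : ∏ t : Fin m, uPoly ^ (i t) = uPoly ^ a := by
    rw [ha, ← Finset.prod_pow_eq_pow_sum]
  have hprod : (∏ t : Fin m, if (t : ℕ) < ℓ then xvar (i t) else yvar k (i t)) =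
      inl (uPoly ^ a) +
        inr (∑ t : Fin m, (∏ r ∈ Finset.univ.erase t, uPoly ^ (i r)) * g t) := by
    rw [Finset.prod_congr rfl (fun t _ => hfactor t), ribbon_aux, hfst]
  -- the lower bounds
  have hle : ∀ t : Fin m, i t ≤ a := by
    intro t
    rw [ha]
    exact Finset.single_le_sum (fun r _ => Nat.zero_le _) (Finset.mem_univ t)
  constructor
  · intro hem
    have hzero : ∀ t : Fin m, g t = 0 := by
      intro t
      have : (t : ℕ) < ℓ := hem ▸ t.isLt
      simp [hg, this]
    rw [hprod]
    simp [hzero]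
  · intro hlt
    have t0 : Fin m := ⟨ℓ, hlt⟩
    have hka : k + 1 ≤ a := le_trans (hy ⟨ℓ, hlt⟩ le_rfl).1 (hle ⟨ℓ, hlt⟩)
    refine ⟨hka, ?_⟩
    rw [hprod]
    congr 1
    congr 1
    -- rewrite each nonzero summand
    have hterm : ∀ t : Fin m, (∏ r ∈ Finset.univ.erase t, uPoly ^ (i r)) * g t =
        if (t : ℕ) < ℓ then 0 else
          ((i t - k : ℕ) : Polynomial ℂ) * uPoly ^ (a - k - 1) := by
      intro t
      by_cases h : (t : ℕ) < ℓ
      · simp [hg, h]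
      · have hik : k + 1 ≤ i t := (hy t (le_of_not_gt h)).1
        have hsum' : i t + ∑ r ∈ Finset.univ.erase t, i r = a := by
          rw [ha]; exact Finset.add_sum_erase _ _ (Finset.mem_univ t)
        have hprodpow : ∏ r ∈ Finset.univ.erase t, uPoly ^ (i r) = uPoly ^ (a - i t) := by
          have he : a - i t = ∑ r ∈ Finset.univ.erase t, i r := by omega
          rw [he, ← Finset.prod_pow_eq_pow_sum]
        rw [hprodpow]
        simp only [hg, if_neg h]
        rw [mul_comm, mul_assoc, ← pow_add]
        congr 2
        omega
    rw [Finset.sum_congr rfl (fun t _ => hterm t), Finset.sum_ite,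
      Finset.sum_const_zero, zero_add, ← Finset.sum_mul, ← Nat.cast_sum]
    congr 2
    -- nat arithmetic: ∑_{t ≥ ℓ} (i t - k) = a - b
    have hcardlt : (Finset.univ.filter (fun t : Fin m => (t : ℕ) < ℓ)).card = ℓ := by
      have : (Finset.univ.filter (fun t : Fin m => (t : ℕ) < ℓ)) =
          Finset.Iio (⟨ℓ, hlt⟩ : Fin m) := by
        ext t
        simp [Fin.lt_def]
      rw [this, Fin.card_Iio]
    have hcards := Finset.card_filter_add_card_filter_not
      (s := (Finset.univ : Finset (Fin m))) (p := fun t : Fin m => (t : ℕ) < ℓ)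
    have hcard : (Finset.univ.filter (fun t : Fin m => ¬ (t : ℕ) < ℓ)).card = m - ℓ := by
      simp only [Finset.card_univ, Fintype.card_fin] at hcards
      omega
    have hsplit := Finset.sum_filter_add_sum_filter_not (Finset.univ : Finset (Fin m))
      (fun t : Fin m => (t : ℕ) < ℓ) i
    have hsub : ∑ t ∈ Finset.univ.filter (fun t : Fin m => ¬ (t : ℕ) < ℓ), (i t - k) =
        (∑ t ∈ Finset.univ.filter (fun t : Fin m => ¬ (t : ℕ) < ℓ), i t) - k * (m - ℓ) := by
      rw [Finset.sum_tsub_distrib]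
      · rw [Finset.sum_const, smul_eq_mul, hcard, mul_comm]
      · intro t ht
        simp only [Finset.mem_filter] at ht
        exact le_of_lt (hy t (le_of_not_gt ht.2)).1
    have hge : k * (m - ℓ) ≤ ∑ t ∈ Finset.univ.filter (fun t : Fin m => ¬ (t : ℕ) < ℓ), i t := by
      calc k * (m - ℓ) = ∑ _t ∈ Finset.univ.filter (fun t : Fin m => ¬ (t : ℕ) < ℓ), k := by
            rw [Finset.sum_const, smul_eq_mul, hcard, mul_comm]
        _ ≤ _ := Finset.sum_le_sum fun t ht => by
            simp only [Finset.mem_filter] at ht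
            exact le_of_lt (hy t (le_of_not_gt ht.2)).1
    rw [hsub]
    omega

end
end

section
/- Let m ≥ 2. For a degree-m monomial x_{i_1}⋯x_{i_ℓ}·y_{i_{ℓ+1}}⋯y_{i_m} (with i_1,…,i_ℓ ∈ {0,…,k} and i_{ℓ+1},…,i_m ∈ {k+1,…,2k}), call a := i_1+⋯+i_m its total index and β := i_{ℓ+1}+⋯+i_m − k(m−ℓ) its second invariant. Then a finite set S of degree-m monomials is a monomial basis of V_m if and only if: (1) for each a with 0 ≤ a ≤ k or (2m−1)k ≤ a ≤ 2mk, exactly one member of S has total index a; and (2) for each a with k < a < (2m−1)k, exactly two members of S have total index a, and these two members have distinct second invariants. (Lemma 3.8.) -/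
/-!
Lemma 3.8 for the balanced ribbon: a combinatorial characterization of the sets of
degree-`m` monomials in the ribbon variables that form a monomial basis of `V_m`.
A degree-`m` monomial is encoded as an element of `Sym (Fin (2k+1)) m`, i.e. a
multiset of `m` indices; index `i ≤ k` stands for `x_i = u^i` and index
`i ≥ k+1` stands for `y_i = u^i + (i-k)u^(i-k-1)ε`.
-/

noncomputable section

open scoped Classical

/-- The ribbon variable attached to an index `i ∈ {0,…,2k}`. -/
def ribVar (k : ℕ) (i : Fin (2 * k + 1)) : RibR :=
  if (i : ℕ) ≤ k then xvar (i : ℕ) else yvar k (i : ℕ)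

/-- The element of `R` given by a monomial, encoded as a multiset of indices. -/
def monElem (k : ℕ) (σ : Multiset (Fin (2 * k + 1))) : RibR := (σ.map (ribVar k)).prod

/-- `V_m`: the `ℂ`-span of all degree-`m` monomials in the ribbon variables. -/
def ribSpan (k m : ℕ) : Submodule ℂ RibR :=
  Submodule.span ℂ
    {r : RibR | ∃ σ : Multiset (Fin (2 * k + 1)), Multiset.card σ = m ∧ r = monElem k σ}

/-- Degree-`m` monomials, as multisets of `m` indices. -/
abbrev DegMon (k m : ℕ) := Sym (Fin (2 * k + 1)) m

/-- The total index `a = i₁ + ⋯ + i_m` of a monomial. -/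
def totalIdx {k m : ℕ} (σ : DegMon k m) : ℕ :=
  (σ.1.map (fun i : Fin (2 * k + 1) => (i : ℕ))).sum

/-- The second invariant `β = i_{ℓ+1}+⋯+i_m − k(m−ℓ) = Σ_{i > k} (i - k)` of a monomial
(truncated subtraction: indices `≤ k` contribute `0`). -/
def secondInv {k m : ℕ} (σ : DegMon k m) : ℕ :=
  (σ.1.map (fun i : Fin (2 * k + 1) => (i : ℕ) - k)).sum

/-- A finite set of degree-`m` monomials is a monomial basis of `V_m` if its images
in `R` are linearly independent over `ℂ` and span `V_m`. -/
def IsMonomialBasis (k m : ℕ) (S : Finset (DegMon k m)) : Prop :=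
  LinearIndependent ℂ (fun s : S => monElem k (s : DegMon k m).1) ∧
  Submodule.span ℂ ((fun s : DegMon k m => monElem k s.1) '' S) = ribSpan k m

open TrivSqZeroExt Polynomial

/-- total index of a multiset -/
def Aof {k : ℕ} (σ : Multiset (Fin (2 * k + 1))) : ℕ :=
  (σ.map (fun i : Fin (2 * k + 1) => (i : ℕ))).sum
def Bof {k : ℕ} (σ : Multiset (Fin (2 * k + 1))) : ℕ :=
  (σ.map (fun i : Fin (2 * k + 1) => (i : ℕ) - k)).sum

lemma ribVar_eq (k : ℕ) (i : Fin (2*k+1)) :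
    ribVar k i = TrivSqZeroExt.inl (uPoly ^ (i:ℕ)) +
      TrivSqZeroExt.inr ((((i:ℕ) - k : ℕ) : Polynomial ℂ) * uPoly ^ ((i:ℕ) - k - 1)) := by
  unfold ribVar xvar yvar
  split
  · next h => simp [Nat.sub_eq_zero_of_le h]
  · rfl

lemma ribVar_fst (k : ℕ) (i : Fin (2*k+1)) : (ribVar k i).fst = uPoly ^ (i:ℕ) := by
  rw [ribVar_eq]; simp

lemma ribVar_snd (k : ℕ) (i : Fin (2*k+1)) :
    (ribVar k i).snd = (((i:ℕ) - k : ℕ) : Polynomial ℂ) * uPoly ^ ((i:ℕ) - k - 1) := by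
  rw [ribVar_eq]; simp

lemma mem_le_Aof {k : ℕ} {σ : Multiset (Fin (2*k+1))} {i : Fin (2*k+1)} (h : i ∈ σ) :
    (i:ℕ) ≤ Aof σ := by
  unfold Aof
  exact Multiset.single_le_sum (fun x hx => Nat.zero_le x) _ (Multiset.mem_map_of_mem _ h)

lemma Bof_pos_A {k : ℕ} {σ : Multiset (Fin (2*k+1))} (h : Bof σ ≠ 0) : k + 1 ≤ Aof σ := by
  unfold Bof at h
  have : ∃ x ∈ σ.map (fun i : Fin (2*k+1) => (i:ℕ) - k), x ≠ 0 := by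
    by_contra hc
    push_neg at hc
    exact h (Multiset.sum_eq_zero hc)
  obtain ⟨x, hx, hx0⟩ := this
  obtain ⟨i, hi, rfl⟩ := Multiset.mem_map.mp hx
  have : k + 1 ≤ (i:ℕ) := by omega
  exact le_trans this (mem_le_Aof hi)

lemma monElem_fst (k : ℕ) (σ : Multiset (Fin (2*k+1))) :
    (monElem k σ).fst = uPoly ^ (Aof σ) := by
  induction σ using Multiset.induction_on with
  | empty => simp [monElem, Aof]
  | cons i σ ih =>
    rw [monElem, Multiset.map_cons, Multiset.prod_cons, fst_mul]
    rw [show ((σ.map (ribVar k)).prod : RibR) = monElem k σ from rfl] at *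
    rw [ih, ribVar_fst]
    rw [show Aof (i ::ₘ σ) = (i:ℕ) + Aof σ by simp [Aof]]
    rw [pow_add]

lemma monElem_snd (k : ℕ) (σ : Multiset (Fin (2*k+1))) :
    (monElem k σ).snd = ((Bof σ : ℕ) : Polynomial ℂ) * uPoly ^ (Aof σ - k - 1) := by
  induction σ using Multiset.induction_on with
  | empty => simp [monElem, Bof]
  | cons i σ ih =>
    rw [monElem, Multiset.map_cons, Multiset.prod_cons, snd_mul]
    rw [show ((σ.map (ribVar k)).prod : RibR) = monElem k σ from rfl]
    rw [ih, ribVar_fst, ribVar_snd, monElem_fst]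
    have hA : Aof (i ::ₘ σ) = (i:ℕ) + Aof σ := by simp [Aof]
    have hB : Bof (i ::ₘ σ) = ((i:ℕ) - k) + Bof σ := by simp [Bof]
    rw [hA, hB]
    rw [smul_eq_mul, op_smul_eq_mul]
    push_cast
    rw [add_mul, add_comm (((((i:ℕ) - k : ℕ)):Polynomial ℂ) * uPoly ^ ((i:ℕ) + Aof σ - k - 1))]
    congr 1
    · by_cases hb : Bof σ = 0
      · simp [hb]
      · have hle : k + 1 ≤ Aof σ := Bof_pos_A hb
        rw [mul_left_comm, ← pow_add]
        congr 2
        omega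
    · by_cases hik : (i:ℕ) ≤ k
      · simp [Nat.sub_eq_zero_of_le hik]
      · rw [mul_assoc, ← pow_add]
        congr 3
        omega

/-- first-component coefficient functional -/
def fstL : RibR →ₗ[ℂ] Polynomial ℂ where
  toFun := TrivSqZeroExt.fst
  map_add' := fst_add
  map_smul' := fst_smul

def sndL : RibR →ₗ[ℂ] Polynomial ℂ where
  toFun := TrivSqZeroExt.snd
  map_add' := snd_add
  map_smul' := snd_smul

def coordL (n : ℕ) : RibR →ₗ[ℂ] ℂ := (lcoeff ℂ n).comp fstL
def coordM (n : ℕ) : RibR →ₗ[ℂ] ℂ := (lcoeff ℂ n).comp sndL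

lemma coordL_monElem (k n : ℕ) (σ : Multiset (Fin (2*k+1))) :
    coordL n (monElem k σ) = if Aof σ = n then 1 else 0 := by
  simp [coordL, fstL, monElem_fst, uPoly, coeff_X_pow, lcoeff_apply, eq_comm]

lemma coordM_monElem (k n : ℕ) (σ : Multiset (Fin (2*k+1))) :
    coordM n (monElem k σ) = if Aof σ - k - 1 = n then (Bof σ : ℂ) else 0 := by
  simp only [coordM, sndL, monElem_snd, uPoly, lcoeff_apply, LinearMap.comp_apply,
    LinearMap.coe_mk, AddHom.coe_mk]
  rw [show ((Bof σ : ℕ) : Polynomial ℂ) = C ((Bof σ : ℕ) : ℂ) by push_cast; rfl]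
  rw [coeff_C_mul, coeff_X_pow]
  by_cases h : Aof σ - k - 1 = n
  · simp [h]
  · simp [show ¬ n = Aof σ - k - 1 from fun hh => h hh.symm, h]

/-- the key reformulation valid for `n = a - k - 1`, `a > k`. -/
lemma coordM_monElem' (k a : ℕ) (ha : k < a) (σ : Multiset (Fin (2*k+1))) :
    coordM (a - k - 1) (monElem k σ) = if Aof σ = a then (Bof σ : ℂ) else 0 := by
  rw [coordM_monElem]
  by_cases hb : Bof σ = 0
  · simp [hb]
  · have hA : k + 1 ≤ Aof σ := Bof_pos_A hb
    have : (Aof σ - k - 1 = a - k - 1) ↔ (Aof σ = a) := by omega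
    simp [this]

lemma bounded_A (k m : ℕ) (σ : Multiset (Fin (2*k+1))) (hc : Multiset.card σ = m) :
    Aof σ ≤ 2 * m * k := by
  unfold Aof
  calc (σ.map (fun i : Fin (2*k+1) => (i:ℕ))).sum
      ≤ (σ.map (fun _ : Fin (2*k+1) => 2*k)).sum := by
        apply Multiset.sum_map_le_sum_map
        intro i _
        exact Nat.lt_succ_iff.mp i.2
    _ = 2 * m * k := by rw [Multiset.map_const', Multiset.sum_replicate, hc, smul_eq_mul]; ring

/-- forced β in the low range -/
lemma forced_low (k : ℕ) (σ : Multiset (Fin (2*k+1))) (h : Aof σ ≤ k) : Bof σ = 0 := by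
  unfold Bof
  apply Multiset.sum_eq_zero
  intro x hx
  obtain ⟨i, hi, rfl⟩ := Multiset.mem_map.mp hx
  have := mem_le_Aof hi
  omega

/-- forced β in the high range -/
lemma forced_high (k m : ℕ) (σ : Multiset (Fin (2*k+1))) (hc : Multiset.card σ = m)
    (h : (2*m - 1) * k ≤ Aof σ) (hm : 1 ≤ m) : Bof σ = Aof σ - m * k ∧ m * k ≤ Aof σ := by
  -- first: every element is ≥ k
  have hdef : (σ.map (fun i : Fin (2*k+1) => 2*k - (i:ℕ))).sum = 2 * m * k - Aof σ := by
    have : (σ.map (fun i : Fin (2*k+1) => 2*k - (i:ℕ))).sum + Aof σ = 2 * m * k := by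
      unfold Aof
      rw [← Multiset.sum_map_add]
      have : (σ.map (fun i : Fin (2*k+1) => 2*k - (i:ℕ) + (i:ℕ))).sum
          = (σ.map (fun _ : Fin (2*k+1) => 2*k)).sum := by
        apply congrArg
        apply Multiset.map_congr rfl
        intro i _
        have : (i:ℕ) ≤ 2*k := Nat.lt_succ_iff.mp i.2
        omega
      rw [this, Multiset.map_const', Multiset.sum_replicate, hc, smul_eq_mul]; ring
    omega
  have hA2 : Aof σ ≤ 2 * m * k := bounded_A k m σ hc
  have hkey : ∀ i ∈ σ, k ≤ (i:ℕ) := by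
    intro i hi
    have h1 : 2*k - (i:ℕ) ≤ 2 * m * k - Aof σ := by
      rw [← hdef]
      exact Multiset.single_le_sum (fun x _ => Nat.zero_le x) _ (Multiset.mem_map_of_mem _ hi)
    have : (i:ℕ) ≤ 2*k := Nat.lt_succ_iff.mp i.2
    have hmk : 2 * m * k - Aof σ ≤ k := by
      have h2 : (2*m - 1) * k + k = 2 * m * k := by
        have hh : 2*m - 1 + 1 = 2*m := by omega
        calc (2*m-1)*k + k = (2*m-1+1)*k := by ring
          _ = 2*m*k := by rw [hh]
      omega
    omega
  constructor
  · have e1 : Bof σ + m * k = (σ.map (fun i : Fin (2*k+1) => ((i:ℕ) - k) + k)).sum := by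
      rw [Multiset.sum_map_add]
      unfold Bof
      congr 1
      rw [Multiset.map_const', Multiset.sum_replicate, hc, smul_eq_mul]
    have e2 : (σ.map (fun i : Fin (2*k+1) => ((i:ℕ) - k) + k)).sum = Aof σ := by
      unfold Aof
      apply congrArg
      apply Multiset.map_congr rfl
      intro i hi
      have := hkey i hi
      omega
    omega
  · have hmk1 : m * k ≤ (2*m-1) * k := by
      apply Nat.mul_le_mul_right
      omega
    omega

lemma exists_parts (c : ℕ) : ∀ (m a : ℕ), a ≤ c * m →
    ∃ t : Multiset ℕ, Multiset.card t = m ∧ (∀ x ∈ t, x ≤ c) ∧ t.sum = a := by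
  intro m
  induction m with
  | zero =>
    intro a ha
    refine ⟨0, by simp, by simp, ?_⟩
    rw [Multiset.sum_zero]
    omega
  | succ n ih =>
    intro a ha
    have hr : c * (n+1) = c*n + c := by ring
    obtain ⟨t, ht1, ht2, ht3⟩ := ih (a - min a c) (by omega)
    refine ⟨(min a c) ::ₘ t, by simp [ht1], ?_, ?_⟩
    · intro x hx
      rcases Multiset.mem_cons.mp hx with h | h
      · omega
      · exact ht2 x h
    · rw [Multiset.sum_cons, ht3]; omega

/-- lift a bounded multiset of naturals to `Fin (2k+1)` -/
lemma lift_parts (k : ℕ) (t : Multiset ℕ) (ht : ∀ x ∈ t, x ≤ 2 * k) :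
    ∃ σ : Multiset (Fin (2*k+1)), Multiset.card σ = Multiset.card t ∧
      Aof σ = t.sum ∧ Bof σ = (t.map (fun x => x - k)).sum := by
  refine ⟨t.map (fun x => (⟨min x (2*k), by omega⟩ : Fin (2*k+1))), by simp, ?_, ?_⟩
  · unfold Aof
    rw [Multiset.map_map]
    apply congrArg
    calc Multiset.map ((fun i : Fin (2*k+1) => (i:ℕ)) ∘ fun x => (⟨min x (2*k), by omega⟩ : Fin (2*k+1))) t
        = Multiset.map id t :=
          Multiset.map_congr rfl (fun x hx => by
            have := ht x hx
            simp only [Function.comp_apply, id]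
            omega)
      _ = t := Multiset.map_id t
  · unfold Bof
    rw [Multiset.map_map]
    apply congrArg
    exact Multiset.map_congr rfl (fun x hx => by
      have := ht x hx
      show (min x (2*k)) - k = x - k
      omega)

lemma exists_mon (k m a : ℕ) (ha : a ≤ 2 * m * k) :
    ∃ σ : Multiset (Fin (2*k+1)), Multiset.card σ = m ∧ Aof σ = a := by
  obtain ⟨t, ht1, ht2, ht3⟩ := exists_parts (2*k) m a (le_of_le_of_eq ha (by ring))
  obtain ⟨σ, hc, hA, _⟩ := lift_parts k t ht2
  exact ⟨σ, by omega, by omega⟩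

/-- in the middle range there are two monomials with distinct second invariants -/
lemma exists_two (k m a : ℕ) (hk : 1 ≤ k) (hm : 2 ≤ m) (h1 : k < a) (h2 : a < (2*m-1)*k) :
    ∃ σ τ : Multiset (Fin (2*k+1)), Multiset.card σ = m ∧ Multiset.card τ = m ∧
      Aof σ = a ∧ Aof τ = a ∧ Bof σ ≠ Bof τ := by
  have hmk : (2*m-1)*k ≤ 2*m*k := Nat.mul_le_mul_right k (by omega)
  have ha2 : a ≤ 2*m*k := by omega
  -- construction A : B = a - m*k
  have hA : ∃ σ : Multiset (Fin (2*k+1)), Multiset.card σ = m ∧ Aof σ = a ∧ Bof σ = a - m*k := by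
    by_cases hcase : a ≤ m * k
    · obtain ⟨t, ht1, ht2, ht3⟩ := exists_parts k m a (le_of_le_of_eq hcase (mul_comm m k))
      obtain ⟨σ, hc, hA, hB⟩ := lift_parts k t (fun x hx => by have := ht2 x hx; omega)
      refine ⟨σ, by omega, by omega, ?_⟩
      rw [hB]
      have : (t.map (fun x => x - k)).sum = 0 := by
        apply Multiset.sum_eq_zero
        intro x hx
        obtain ⟨y, hy, rfl⟩ := Multiset.mem_map.mp hx
        have := ht2 y hy
        omega
      omega
    · -- a > m*k : parts k + p i
      have hbound : a - m*k ≤ k * m := by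
        have : a ≤ 2*m*k := ha2
        have : m*k + k*m = 2*m*k := by ring
        omega
      obtain ⟨t, ht1, ht2, ht3⟩ := exists_parts k m (a - m*k) hbound
      set t' : Multiset ℕ := t.map (fun x => k + x) with ht'
      have hb' : ∀ x ∈ t', x ≤ 2*k := by
        intro x hx
        obtain ⟨y, hy, rfl⟩ := Multiset.mem_map.mp hx
        have := ht2 y hy
        omega
      obtain ⟨σ, hc, hA, hB⟩ := lift_parts k t' hb'
      have hsum : t'.sum = a := by
        rw [ht', Multiset.sum_map_add]
        simp [Multiset.map_const', Multiset.sum_replicate, ht1, ht3]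
        omega
      have hcard : Multiset.card t' = m := by simp [ht', ht1]
      refine ⟨σ, by omega, by omega, ?_⟩
      rw [hB]
      have : (t'.map (fun x => x - k)).sum = t.sum := by
        rw [ht', Multiset.map_map]
        apply congrArg
        calc Multiset.map ((fun x => x - k) ∘ fun x => k + x) t = Multiset.map id t :=
              Multiset.map_congr rfl (fun x hx => by simp only [Function.comp_apply, id]; omega)
          _ = t := Multiset.map_id t
      omega
  -- construction B : B = q*k + (r - k),  q = a / (2*k), r = a % (2*k)
  set q := a / (2*k) with hq
  set r := a % (2*k) with hr
  have hk2 : 0 < 2*k := by omega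
  have hqr : 2*k*q + r = a := by rw [hq, hr]; exact Nat.div_add_mod a (2*k)
  have hrlt : r < 2*k := Nat.mod_lt a hk2
  have hqm : q < m := by
    have : a < 2*k*m := by
      calc a < (2*m-1)*k := h2
        _ ≤ 2*k*m := by have : (2*m-1) ≤ 2*m := by omega
                        calc (2*m-1)*k ≤ 2*m*k := Nat.mul_le_mul_right k this
                          _ = 2*k*m := by ring
    exact Nat.div_lt_of_lt_mul this
  have hBc : ∃ τ : Multiset (Fin (2*k+1)), Multiset.card τ = m ∧ Aof τ = a ∧
      Bof τ = q*k + (r - k) := by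
    set t : Multiset ℕ := Multiset.replicate q (2*k) + (r ::ₘ Multiset.replicate (m-1-q) 0) with htd
    have hb : ∀ x ∈ t, x ≤ 2*k := by
      intro x hx
      rw [htd] at hx
      rcases Multiset.mem_add.mp hx with h | h
      · rw [Multiset.eq_of_mem_replicate h]
      · rcases Multiset.mem_cons.mp h with h | h
        · omega
        · rw [Multiset.eq_of_mem_replicate h]; omega
    obtain ⟨σ, hc, hA, hB⟩ := lift_parts k t hb
    have hcard : Multiset.card t = m := by
      rw [htd]; simp; omega
    have hsum : t.sum = a := by
      rw [htd]
      simp [Multiset.sum_replicate]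
      have : q * (2*k) = 2*k*q := by ring
      omega
    refine ⟨σ, by omega, by omega, ?_⟩
    rw [hB, htd]
    rw [Multiset.map_add, Multiset.map_cons, Multiset.map_replicate, Multiset.map_replicate]
    rw [Multiset.sum_add, Multiset.sum_cons, Multiset.sum_replicate, Multiset.sum_replicate]
    have e1 : 2*k - k = k := by omega
    have e2 : 0 - k = 0 := by omega
    rw [e1, e2, smul_eq_mul, smul_eq_mul]
    omega
  obtain ⟨σ, hs1, hs2, hs3⟩ := hA
  obtain ⟨τ, ht1', ht2', ht3'⟩ := hBc
  refine ⟨σ, τ, hs1, ht1', hs2, ht2', ?_⟩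
  rw [hs3, ht3']
  have e1 : 2*k*q = q*k + q*k := by ring
  have e0 : (2*m-1)*k + k = 2*m*k := by
    have hh : 2*m-1+1 = 2*m := by omega
    calc (2*m-1)*k + k = (2*m-1+1)*k := by ring
      _ = 2*m*k := by rw [hh]
  have e2 : 2*m*k = m*k + m*k := by ring
  have e3 : q*k + k ≤ m*k := by
    calc q*k + k = (q+1)*k := by ring
      _ ≤ m*k := Nat.mul_le_mul_right k hqm
  omega

lemma natCast_poly (n : ℕ) : ((n : ℕ) : Polynomial ℂ) = C ((n:ℕ) : ℂ) := by push_cast; rfl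

lemma monElem_eq_of (k : ℕ) (σ τ : Multiset (Fin (2*k+1))) (hA : Aof σ = Aof τ)
    (hB : Bof σ = Bof τ) : monElem k σ = monElem k τ := by
  apply TrivSqZeroExt.ext
  · rw [monElem_fst, monElem_fst, hA]
  · rw [monElem_snd, monElem_snd, hA, hB]

lemma triple_dep (k a : ℕ) (σ1 σ2 σ3 : Multiset (Fin (2*k+1)))
    (h1 : Aof σ1 = a) (h2 : Aof σ2 = a) (h3 : Aof σ3 = a) :
    (((Bof σ2 : ℂ)) - (Bof σ3 : ℂ)) • monElem k σ1 +
      (((Bof σ3 : ℂ)) - (Bof σ1 : ℂ)) • monElem k σ2 +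
      (((Bof σ1 : ℂ)) - (Bof σ2 : ℂ)) • monElem k σ3 = 0 := by
  apply TrivSqZeroExt.ext
  · rw [fst_add, fst_add, fst_smul, fst_smul, fst_smul, monElem_fst, monElem_fst, monElem_fst,
      h1, h2, h3, fst_zero, ← add_smul, ← add_smul]
    have : ((Bof σ2 : ℂ)) - (Bof σ3 : ℂ) + ((Bof σ3 : ℂ) - (Bof σ1 : ℂ)) +
        ((Bof σ1 : ℂ) - (Bof σ2 : ℂ)) = 0 := by ring
    rw [this, zero_smul]
  · rw [snd_add, snd_add, snd_smul, snd_smul, snd_smul, monElem_snd, monElem_snd, monElem_snd,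
      h1, h2, h3, snd_zero, natCast_poly, natCast_poly, natCast_poly]
    rw [smul_eq_C_mul, smul_eq_C_mul, smul_eq_C_mul]
    unfold uPoly
    have key : ∀ b1 b2 b3 : ℂ, ∀ e : ℕ,
        C (b2 - b3) * (C b1 * X ^ e) + C (b3 - b1) * (C b2 * X ^ e) +
          C (b1 - b2) * (C b3 * X ^ e) = 0 := by
      intro b1 b2 b3 e
      rw [map_sub, map_sub, map_sub]
      ring
    exact key _ _ _ _

lemma pair_comb (k a : ℕ) (σ σ1 σ2 : Multiset (Fin (2*k+1)))
    (hA : Aof σ = a) (hA1 : Aof σ1 = a) (hA2 : Aof σ2 = a) (hb : Bof σ1 ≠ Bof σ2) :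
    monElem k σ =
      (((Bof σ : ℂ) - (Bof σ2 : ℂ)) / ((Bof σ1 : ℂ) - (Bof σ2 : ℂ))) • monElem k σ1 +
      (((Bof σ1 : ℂ) - (Bof σ : ℂ)) / ((Bof σ1 : ℂ) - (Bof σ2 : ℂ))) • monElem k σ2 := by
  have hd : (Bof σ1 : ℂ) - (Bof σ2 : ℂ) ≠ 0 := by
    intro h
    apply hb
    exact_mod_cast sub_eq_zero.mp h
  apply TrivSqZeroExt.ext
  · rw [fst_add, fst_smul, fst_smul, monElem_fst, monElem_fst, monElem_fst, hA, hA1, hA2,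
      ← add_smul]
    have : ((Bof σ : ℂ) - (Bof σ2 : ℂ)) / ((Bof σ1 : ℂ) - (Bof σ2 : ℂ)) +
        ((Bof σ1 : ℂ) - (Bof σ : ℂ)) / ((Bof σ1 : ℂ) - (Bof σ2 : ℂ)) = 1 := by
      rw [← add_div, div_eq_one_iff_eq hd]
      ring
    rw [this, one_smul]
  · rw [snd_add, snd_smul, snd_smul, monElem_snd, monElem_snd, monElem_snd, hA, hA1, hA2,
      natCast_poly, natCast_poly, natCast_poly, smul_eq_C_mul, smul_eq_C_mul]
    unfold uPoly
    have key : (C (((Bof σ : ℂ) - (Bof σ2 : ℂ)) / ((Bof σ1 : ℂ) - (Bof σ2 : ℂ))) *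
          (C ((Bof σ1 : ℕ) : ℂ) * X ^ (a - k - 1)) +
        C (((Bof σ1 : ℂ) - (Bof σ : ℂ)) / ((Bof σ1 : ℂ) - (Bof σ2 : ℂ))) *
          (C ((Bof σ2 : ℕ) : ℂ) * X ^ (a - k - 1))) =
        C (((Bof σ : ℂ) - (Bof σ2 : ℂ)) / ((Bof σ1 : ℂ) - (Bof σ2 : ℂ)) * (Bof σ1 : ℂ) +
           ((Bof σ1 : ℂ) - (Bof σ : ℂ)) / ((Bof σ1 : ℂ) - (Bof σ2 : ℂ)) * (Bof σ2 : ℂ)) *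
          X ^ (a - k - 1) := by
      rw [map_add, map_mul, map_mul]
      ring
    rw [key]
    congr 2
    field_simp
    ring

lemma totalIdx_eq {k m : ℕ} (σ : DegMon k m) : totalIdx σ = Aof σ.1 := rfl
lemma secondInv_eq {k m : ℕ} (σ : DegMon k m) : secondInv σ = Bof σ.1 := rfl

theorem forward_dir (k m : ℕ) (hk : 1 ≤ k) (hm : 2 ≤ m) (S : Finset (DegMon k m))
    (hbasis : IsMonomialBasis k m S) :
    ((∀ a : ℕ, (a ≤ k ∨ ((2 * m - 1) * k ≤ a ∧ a ≤ 2 * m * k)) →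
        (S.filter (fun σ => totalIdx σ = a)).card = 1) ∧
     (∀ a : ℕ, k < a → a < (2 * m - 1) * k →
        (S.filter (fun σ => totalIdx σ = a)).card = 2 ∧
        ∀ σ ∈ S, ∀ τ ∈ S, totalIdx σ = a → totalIdx τ = a → σ ≠ τ →
          secondInv σ ≠ secondInv τ)) := by
  obtain ⟨hind, hspan⟩ := hbasis
  have hk2mk : k ≤ 2*m*k := by
    calc k = 1*k := (one_mul k).symm
      _ ≤ (2*m)*k := Nat.mul_le_mul_right k (by omega)
  have h2m1 : (2*m-1)*k ≤ 2*m*k := Nat.mul_le_mul_right k (by omega)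
  have hinj : ∀ σ ∈ S, ∀ τ ∈ S, totalIdx σ = totalIdx τ → secondInv σ = secondInv τ → σ = τ := by
    intro σ hσ τ hτ hA hB
    have heq : monElem k (σ : DegMon k m).1 = monElem k (τ : DegMon k m).1 :=
      monElem_eq_of k _ _ hA hB
    have := hind.injective (a₁ := (⟨σ, hσ⟩ : {x // x ∈ S})) (a₂ := ⟨τ, hτ⟩) heq
    simpa using this
  have hge1 : ∀ a, a ≤ 2*m*k → ∃ σ ∈ S, totalIdx σ = a := by
    intro a ha
    by_contra hc
    push_neg at hc
    have hker : ribSpan k m ≤ LinearMap.ker (coordL a) := by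
      rw [← hspan]
      apply Submodule.span_le.mpr
      rintro r ⟨s, hs, rfl⟩
      simp only [SetLike.mem_coe, LinearMap.mem_ker]
      rw [coordL_monElem, if_neg]
      exact fun h => hc s (Finset.mem_coe.mp hs) h
    obtain ⟨σ0, hc0, hA0⟩ := exists_mon k m a ha
    have hmem : monElem k σ0 ∈ ribSpan k m := Submodule.subset_span ⟨σ0, hc0, rfl⟩
    have h0 := hker hmem
    rw [LinearMap.mem_ker, coordL_monElem, if_pos hA0] at h0
    exact one_ne_zero h0
  refine ⟨?_, ?_⟩
  · intro a hrange
    have ha : a ≤ 2*m*k := by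
      rcases hrange with h | ⟨h1, h2⟩
      · omega
      · exact h2
    apply le_antisymm
    · apply Finset.card_le_one.mpr
      intro σ hσ τ hτ
      rw [Finset.mem_filter] at hσ hτ
      apply hinj σ hσ.1 τ hτ.1 (hσ.2.trans hτ.2.symm)
      rw [secondInv_eq, secondInv_eq]
      rcases hrange with h | ⟨h1, h2⟩
      · rw [forced_low k σ.1 (by rw [← totalIdx_eq, hσ.2]; omega),
            forced_low k τ.1 (by rw [← totalIdx_eq, hτ.2]; omega)]
      · have f1 := forced_high k m σ.1 σ.2 (by rw [← totalIdx_eq, hσ.2]; omega) (by omega)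
        have f2 := forced_high k m τ.1 τ.2 (by rw [← totalIdx_eq, hτ.2]; omega) (by omega)
        rw [f1.1, f2.1, ← totalIdx_eq, ← totalIdx_eq, hσ.2, hτ.2]
    · rw [Nat.one_le_iff_ne_zero, ← Nat.pos_iff_ne_zero, Finset.card_pos]
      obtain ⟨σ, hσ, hA⟩ := hge1 a ha
      exact ⟨σ, Finset.mem_filter.mpr ⟨hσ, hA⟩⟩
  · intro a h1 h2
    have hdist : ∀ σ ∈ S, ∀ τ ∈ S, totalIdx σ = a → totalIdx τ = a → σ ≠ τ →
        secondInv σ ≠ secondInv τ := by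
      intro σ hσ τ hτ hAσ hAτ hne hB
      exact hne (hinj σ hσ τ hτ (hAσ.trans hAτ.symm) hB)
    refine ⟨?_, hdist⟩
    have ha : a ≤ 2*m*k := by omega
    obtain ⟨σ1, hσ1, hA1⟩ := hge1 a ha
    have h2e : ∃ τ ∈ S, totalIdx τ = a ∧ τ ≠ σ1 := by
      by_contra hcon
      push_neg at hcon
      set ν : RibR →ₗ[ℂ] ℂ := coordM (a - k - 1) - (secondInv σ1 : ℂ) • coordL a with hν
      have hker : ribSpan k m ≤ LinearMap.ker ν := by
        rw [← hspan]
        apply Submodule.span_le.mpr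
        rintro r ⟨s, hs, rfl⟩
        simp only [SetLike.mem_coe, LinearMap.mem_ker, hν, LinearMap.sub_apply,
          LinearMap.smul_apply, smul_eq_mul]
        rw [coordM_monElem' k a h1, coordL_monElem]
        by_cases hA : Aof (s.1) = a
        · rw [if_pos hA, if_pos hA]
          have hs1 : s = σ1 := hcon s (Finset.mem_coe.mp hs) hA
          rw [hs1, secondInv_eq]
          ring
        · rw [if_neg hA, if_neg hA]; ring
      obtain ⟨σ, τ, hcσ, hcτ, hAσ, hAτ, hBστ⟩ := exists_two k m a hk hm h1 h2
      have key : ∀ ρ : Multiset (Fin (2*k+1)), Multiset.card ρ = m → Aof ρ = a →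
          Bof ρ ≠ Bof σ1.1 → False := by
        intro ρ hcρ hAρ hBρ
        have hmem : monElem k ρ ∈ ribSpan k m := Submodule.subset_span ⟨ρ, hcρ, rfl⟩
        have h0 := hker hmem
        rw [LinearMap.mem_ker, hν] at h0
        simp only [LinearMap.sub_apply, LinearMap.smul_apply, smul_eq_mul] at h0
        rw [coordM_monElem' k a h1, coordL_monElem, if_pos hAρ, if_pos hAρ, mul_one] at h0
        have hcast : (Bof ρ : ℂ) = ((secondInv σ1 : ℕ) : ℂ) := sub_eq_zero.mp h0
        exact hBρ (by exact_mod_cast hcast)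
      have hone : Bof σ ≠ Bof σ1.1 ∨ Bof τ ≠ Bof σ1.1 := by omega
      rcases hone with h | h
      · exact key σ hcσ hAσ h
      · exact key τ hcτ hAτ h
    obtain ⟨τ1, hτ1, hAτ1, hneτ⟩ := h2e
    have hle2 : (S.filter (fun σ => totalIdx σ = a)).card ≤ 2 := by
      by_contra hgt
      push_neg at hgt
      obtain ⟨x, y, z, hx, hy, hz, hxy, hxz, hyz⟩ := Finset.two_lt_card_iff.mp hgt
      rw [Finset.mem_filter] at hx hy hz
      have hb12 : secondInv x ≠ secondInv y := hdist x hx.1 y hy.1 hx.2 hy.2 hxy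
      have hb23 : secondInv y ≠ secondInv z := hdist y hy.1 z hz.1 hy.2 hz.2 hyz
      have hb13 : secondInv x ≠ secondInv z := hdist x hx.1 z hz.1 hx.2 hz.2 hxz
      set g : {s // s ∈ S} → ℂ := fun s =>
        if s.1 = x then ((secondInv y : ℂ) - secondInv z)
        else if s.1 = y then ((secondInv z : ℂ) - secondInv x)
        else if s.1 = z then ((secondInv x : ℂ) - secondInv y) else 0 with hg
      have hxS : (⟨x, hx.1⟩ : {s // s ∈ S}) ≠ ⟨y, hy.1⟩ := by simp [hxy]
      have hxzS : (⟨x, hx.1⟩ : {s // s ∈ S}) ≠ ⟨z, hz.1⟩ := by simp [hxz]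
      have hyzS : (⟨y, hy.1⟩ : {s // s ∈ S}) ≠ ⟨z, hz.1⟩ := by simp [hyz]
      have gx : g ⟨x, hx.1⟩ = (secondInv y : ℂ) - secondInv z := by simp [hg]
      have gy : g ⟨y, hy.1⟩ = (secondInv z : ℂ) - secondInv x := by simp [hg, Ne.symm hxy]
      have gz : g ⟨z, hz.1⟩ = (secondInv x : ℂ) - secondInv y := by
        simp [hg, Ne.symm hxz, Ne.symm hyz]
      have hsum : ∑ s : {x // x ∈ S}, g s • monElem k (s : DegMon k m).1 = 0 := by
        have hvan : ∀ s ∈ Finset.univ,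
            s ∉ ({⟨x, hx.1⟩, ⟨y, hy.1⟩, ⟨z, hz.1⟩} : Finset {s // s ∈ S}) →
            g s • monElem k (s : DegMon k m).1 = 0 := by
          intro s _ hs
          simp only [Finset.mem_insert, Finset.mem_singleton] at hs
          push_neg at hs
          have e1 : ¬ s.1 = x := fun h => hs.1 (Subtype.ext h)
          have e2 : ¬ s.1 = y := fun h => hs.2.1 (Subtype.ext h)
          have e3 : ¬ s.1 = z := fun h => hs.2.2 (Subtype.ext h)
          rw [hg]
          simp only [e1, e2, e3, if_false, zero_smul]
        rw [← Finset.sum_subset (Finset.subset_univ _) hvan]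
        rw [Finset.sum_insert (by simp [hxS, hxzS]),
          Finset.sum_insert (by simp [hyzS]), Finset.sum_singleton]
        rw [gx, gy, gz]
        rw [secondInv_eq x, secondInv_eq y, secondInv_eq z]
        rw [← add_assoc]
        exact triple_dep k a x.1 y.1 z.1 hx.2 hy.2 hz.2
      have h0 := Fintype.linearIndependent_iff.mp hind g hsum ⟨x, hx.1⟩
      rw [gx] at h0
      have : (secondInv y : ℂ) = (secondInv z : ℂ) := sub_eq_zero.mp h0
      exact hb23 (by exact_mod_cast this)
    have hge2 : 2 ≤ (S.filter (fun σ => totalIdx σ = a)).card := by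
      apply Finset.one_lt_card.mpr
      exact ⟨τ1, Finset.mem_filter.mpr ⟨hτ1, hAτ1⟩, σ1, Finset.mem_filter.mpr ⟨hσ1, hA1⟩, hneτ⟩
    omega

theorem backward_dir (k m : ℕ) (hk : 1 ≤ k) (hm : 2 ≤ m) (S : Finset (DegMon k m))
    (hout : ∀ a : ℕ, (a ≤ k ∨ ((2 * m - 1) * k ≤ a ∧ a ≤ 2 * m * k)) →
        (S.filter (fun σ => totalIdx σ = a)).card = 1)
    (hmid : ∀ a : ℕ, k < a → a < (2 * m - 1) * k →
        (S.filter (fun σ => totalIdx σ = a)).card = 2 ∧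
        ∀ σ ∈ S, ∀ τ ∈ S, totalIdx σ = a → totalIdx τ = a → σ ≠ τ →
          secondInv σ ≠ secondInv τ) :
    IsMonomialBasis k m S := by
  have hk2mk : k ≤ 2*m*k := by
    calc k = 1*k := (one_mul k).symm
      _ ≤ (2*m)*k := Nat.mul_le_mul_right k (by omega)
  have h2m1 : (2*m-1)*k ≤ 2*m*k := Nat.mul_le_mul_right k (by omega)
  constructor
  · rw [Fintype.linearIndependent_iff]
    intro g hg
    have hφ : ∀ (φ : RibR →ₗ[ℂ] ℂ),
        ∑ s : {x // x ∈ S}, g s * φ (monElem k (s : DegMon k m).1) = 0 := by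
      intro φ
      have h0 := congrArg φ hg
      rw [map_sum, map_zero] at h0
      simpa [map_smul, smul_eq_mul] using h0
    intro s0
    set a := totalIdx (s0 : DegMon k m) with haa
    have hbound : a ≤ 2*m*k := by
      rw [haa, totalIdx_eq]
      exact bounded_A k m (s0 : DegMon k m).1 (s0 : DegMon k m).2
    by_cases hcase : a ≤ k ∨ ((2*m-1)*k ≤ a ∧ a ≤ 2*m*k)
    · -- outer range : singleton
      obtain ⟨σ1, hfs⟩ := Finset.card_eq_one.mp (hout a hcase)
      have h0 := hφ (coordL a)
      rw [Finset.sum_eq_single_of_mem s0 (Finset.mem_univ s0)] at h0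
      · rw [coordL_monElem, if_pos (by rw [← totalIdx_eq, ← haa]), mul_one] at h0
        exact h0
      · intro b _ hb
        rw [coordL_monElem, if_neg, mul_zero]
        intro hA
        have hbf : (b : DegMon k m) ∈ S.filter (fun σ => totalIdx σ = a) :=
          Finset.mem_filter.mpr ⟨b.2, hA⟩
        have hsf : (s0 : DegMon k m) ∈ S.filter (fun σ => totalIdx σ = a) :=
          Finset.mem_filter.mpr ⟨s0.2, rfl⟩
        rw [hfs, Finset.mem_singleton] at hbf hsf
        exact hb (Subtype.ext (hbf.trans hsf.symm))
    · -- middle range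
      push_neg at hcase
      have h1 : k < a := by omega
      have h2 : a < (2*m-1)*k := by omega
      obtain ⟨hcard2, hd⟩ := hmid a h1 h2
      obtain ⟨σ1, σ2, hne, hfs⟩ := Finset.card_eq_two.mp hcard2
      have hσ1 : σ1 ∈ S ∧ totalIdx σ1 = a := by
        have : σ1 ∈ S.filter (fun σ => totalIdx σ = a) := by rw [hfs]; simp
        exact Finset.mem_filter.mp this
      have hσ2 : σ2 ∈ S ∧ totalIdx σ2 = a := by
        have : σ2 ∈ S.filter (fun σ => totalIdx σ = a) := by rw [hfs]; simp
        exact Finset.mem_filter.mp this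
      have hb12 : secondInv σ1 ≠ secondInv σ2 := hd σ1 hσ1.1 σ2 hσ2.1 hσ1.2 hσ2.2 hne
      have hS1 : (⟨σ1, hσ1.1⟩ : {x // x ∈ S}) ≠ ⟨σ2, hσ2.1⟩ := by simp [hne]
      set T : Finset {x // x ∈ S} := {⟨σ1, hσ1.1⟩, ⟨σ2, hσ2.1⟩} with hT
      have hmemT : ∀ s : {x // x ∈ S}, Aof (s : DegMon k m).1 = a → s ∈ T := by
        intro s hA
        have : (s : DegMon k m) ∈ S.filter (fun σ => totalIdx σ = a) :=
          Finset.mem_filter.mpr ⟨s.2, hA⟩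
        rw [hfs] at this
        rcases Finset.mem_insert.mp this with h | h
        · exact Finset.mem_insert.mpr (Or.inl (Subtype.ext h))
        · exact Finset.mem_insert.mpr (Or.inr (by
            rw [Finset.mem_singleton]
            exact Subtype.ext (Finset.mem_singleton.mp h)))
      -- equation 1 : sums of g over T vanish
      have hsumL := hφ (coordL a)
      rw [← Finset.sum_subset (Finset.subset_univ T) (by
        intro s _ hs
        rw [coordL_monElem, if_neg, mul_zero]
        exact fun hA => hs (hmemT s hA))] at hsumL
      rw [hT, Finset.sum_pair hS1] at hsumL
      rw [coordL_monElem, coordL_monElem,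
        if_pos (show Aof σ1.1 = a from hσ1.2), if_pos (show Aof σ2.1 = a from hσ2.2),
        mul_one, mul_one] at hsumL
      -- equation 2
      have hsumM := hφ (coordM (a - k - 1))
      rw [← Finset.sum_subset (Finset.subset_univ T) (by
        intro s _ hs
        rw [coordM_monElem' k a h1, if_neg, mul_zero]
        exact fun hA => hs (hmemT s hA))] at hsumM
      rw [hT, Finset.sum_pair hS1] at hsumM
      rw [coordM_monElem' k a h1, coordM_monElem' k a h1,
        if_pos (show Aof σ1.1 = a from hσ1.2), if_pos (show Aof σ2.1 = a from hσ2.2)] at hsumM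
      -- solve
      have hbne : ((Bof σ1.1 : ℕ) : ℂ) ≠ ((Bof σ2.1 : ℕ) : ℂ) := by
        rw [secondInv_eq, secondInv_eq] at hb12
        exact_mod_cast hb12
      have hg1 : g ⟨σ1, hσ1.1⟩ = 0 := by
        have e3 : g ⟨σ1, hσ1.1⟩ * ((Bof σ1.1 : ℂ) - (Bof σ2.1 : ℂ)) = 0 := by
          linear_combination hsumM - (Bof σ2.1 : ℂ) * hsumL
        rcases mul_eq_zero.mp e3 with h | h
        · exact h
        · exact absurd (sub_eq_zero.mp h) hbne
      have hg2 : g ⟨σ2, hσ2.1⟩ = 0 := by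
        have := hsumL
        rw [hg1, zero_add] at this
        exact this
      have hs0T : s0 ∈ T := hmemT s0 (by rw [← totalIdx_eq, ← haa])
      rw [hT, Finset.mem_insert, Finset.mem_singleton] at hs0T
      rcases hs0T with h | h
      · rw [h]; exact hg1
      · rw [h]; exact hg2
  · apply le_antisymm
    · apply Submodule.span_le.mpr
      rintro r ⟨s, _, rfl⟩
      exact Submodule.subset_span ⟨s.1, s.2, rfl⟩
    · apply Submodule.span_le.mpr
      rintro r ⟨σ, hcard, rfl⟩
      set a := Aof σ with haa
      have hbound : a ≤ 2*m*k := bounded_A k m σ hcard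
      by_cases hcase : a ≤ k ∨ ((2*m-1)*k ≤ a ∧ a ≤ 2*m*k)
      · obtain ⟨σ1, hfs⟩ := Finset.card_eq_one.mp (hout a hcase)
        have hσ1 : σ1 ∈ S ∧ totalIdx σ1 = a := by
          have : σ1 ∈ S.filter (fun σ => totalIdx σ = a) := by rw [hfs]; simp
          exact Finset.mem_filter.mp this
        have heq : monElem k σ = monElem k σ1.1 := by
          apply monElem_eq_of k σ σ1.1 (by rw [← haa, ← totalIdx_eq, hσ1.2])
          rcases hcase with h | ⟨hlo, hhi⟩
          · rw [forced_low k σ (by omega), forced_low k σ1.1 (by rw [← totalIdx_eq, hσ1.2]; omega)]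
          · have f1 := forced_high k m σ hcard (by omega) (by omega)
            have f2 := forced_high k m σ1.1 σ1.2 (by rw [← totalIdx_eq, hσ1.2]; omega) (by omega)
            rw [f1.1, f2.1, ← totalIdx_eq, hσ1.2, ← haa]
        rw [heq]
        exact Submodule.subset_span ⟨σ1, hσ1.1, rfl⟩
      · push_neg at hcase
        have h1 : k < a := by omega
        have h2 : a < (2*m-1)*k := by omega
        obtain ⟨hcard2, hd⟩ := hmid a h1 h2
        obtain ⟨σ1, σ2, hne, hfs⟩ := Finset.card_eq_two.mp hcard2
        have hσ1 : σ1 ∈ S ∧ totalIdx σ1 = a := by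
          have : σ1 ∈ S.filter (fun σ => totalIdx σ = a) := by rw [hfs]; simp
          exact Finset.mem_filter.mp this
        have hσ2 : σ2 ∈ S ∧ totalIdx σ2 = a := by
          have : σ2 ∈ S.filter (fun σ => totalIdx σ = a) := by rw [hfs]; simp
          exact Finset.mem_filter.mp this
        have hb12 : Bof σ1.1 ≠ Bof σ2.1 := by
          have := hd σ1 hσ1.1 σ2 hσ2.1 hσ1.2 hσ2.2 hne
          rw [secondInv_eq, secondInv_eq] at this
          exact this
        rw [pair_comb k a σ σ1.1 σ2.1 haa.symm
          (by rw [← totalIdx_eq, hσ1.2]) (by rw [← totalIdx_eq, hσ2.2]) hb12]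
        apply Submodule.add_mem
        · exact Submodule.smul_mem _ _ (Submodule.subset_span ⟨σ1, hσ1.1, rfl⟩)
        · exact Submodule.smul_mem _ _ (Submodule.subset_span ⟨σ2, hσ2.1, rfl⟩)

/-- Lemma 3.8. -/
theorem ribbon_monomial_basis_criterion (k m : ℕ) (hk : 1 ≤ k) (hm : 2 ≤ m)
    (S : Finset (DegMon k m)) :
    IsMonomialBasis k m S ↔
      ((∀ a : ℕ, (a ≤ k ∨ ((2 * m - 1) * k ≤ a ∧ a ≤ 2 * m * k)) →
          (S.filter (fun σ => totalIdx σ = a)).card = 1) ∧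
       (∀ a : ℕ, k < a → a < (2 * m - 1) * k →
          (S.filter (fun σ => totalIdx σ = a)).card = 2 ∧
          ∀ σ ∈ S, ∀ τ ∈ S, totalIdx σ = a → totalIdx τ = a → σ ≠ τ →
            secondInv σ ≠ secondInv τ)) := by
  constructor
  · intro h
    exact forward_dir k m hk hm S h
  · rintro ⟨hout, hmid⟩
    exact backward_dir k m hk hm S hout hmid

end
end

section
/- Let m ≥ 3 and g = 2k+1 ≥ 3. Define linear forms in ρ = (ρ_0,…,ρ_{2k}) ∈ ℤ^{2k+1}: W₁⁺(ρ) = ((m−1)²(g−1)−(2m−3))·ρ_k + (m(m−1)(g−1)/2 − 1)·(ρ_0+ρ_{2k}); W₂⁺(ρ) = ((m−1)(g−1)+(2m−5))·ρ_k + ((m−1)²(g−1)−(2m−3))·(ρ_0+ρ_{2k}); and W⁻(ρ) = −(m²−3m+5)·(ρ_0+ρ_{2k}) − (5m−10)·ρ_k if m is odd, W⁻(ρ) = −(m²−3m+6)·(ρ_0+ρ_{2k}) − (5m−12)·ρ_k if m is even. Then there exist positive rational numbers c₀, c₁, c₂ such that c₀·W⁻(ρ) + c₁·W₁⁺(ρ)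 + c₂·W₂⁺(ρ) = 0 for every ρ ∈ ℤ^{2k+1} with ρ_0+⋯+ρ_{2k} = 0. (Lemma 4.8; these three forms are the ρ-weights of the monomial bases B⁻, B₁⁺, B₂⁺ of V_m.) -/
/-!
Lemma 4.8: there exist positive rationals `c₀, c₁, c₂` such that
`c₀·W⁻(ρ) + c₁·W₁⁺(ρ) + c₂·W₂⁺(ρ) = 0` for every integer weight vector
`ρ = (ρ₀,…,ρ_{2k})` with `ρ₀ + ⋯ + ρ_{2k} = 0`.  Here `g = 2k+1` (so `g-1 = 2k`) and
`W₁⁺, W₂⁺, W⁻` are the ρ-weights of the monomial bases `B₁⁺, B₂⁺, B⁻` of `V_m`.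
-/

/-- `W₁⁺(ρ) = ((m−1)²(g−1)−(2m−3))·ρ_k + (m(m−1)(g−1)/2 − 1)·(ρ₀+ρ_{2k})`, with `g-1 = 2k`. -/
noncomputable def W1plus (k m : ℕ) (hk : 1 ≤ k) (ρ : Fin (2 * k + 1) → ℤ) : ℚ :=
  (((m : ℚ) - 1) ^ 2 * (2 * k) - (2 * m - 3)) * (ρ ⟨k, by omega⟩ : ℤ) +
    ((m : ℚ) * ((m : ℚ) - 1) * (2 * k) / 2 - 1) *
      ((ρ ⟨0, by omega⟩ : ℤ) + (ρ ⟨2 * k, by omega⟩ : ℤ))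

/-- `W₂⁺(ρ) = ((m−1)(g−1)+(2m−5))·ρ_k + ((m−1)²(g−1)−(2m−3))·(ρ₀+ρ_{2k})`, with `g-1 = 2k`. -/
noncomputable def W2plus (k m : ℕ) (hk : 1 ≤ k) (ρ : Fin (2 * k + 1) → ℤ) : ℚ :=
  (((m : ℚ) - 1) * (2 * k) + (2 * m - 5)) * (ρ ⟨k, by omega⟩ : ℤ) +
    (((m : ℚ) - 1) ^ 2 * (2 * k) - (2 * m - 3)) *
      ((ρ ⟨0, by omega⟩ : ℤ) + (ρ ⟨2 * k, by omega⟩ : ℤ))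

/-- `W⁻(ρ) = −(m²−3m+5)(ρ₀+ρ_{2k}) − (5m−10)ρ_k` if `m` is odd, and
`W⁻(ρ) = −(m²−3m+6)(ρ₀+ρ_{2k}) − (5m−12)ρ_k` if `m` is even. -/
noncomputable def Wminus (k m : ℕ) (hk : 1 ≤ k) (ρ : Fin (2 * k + 1) → ℤ) : ℚ :=
  if Odd m then
    -((m : ℚ) ^ 2 - 3 * m + 5) * ((ρ ⟨0, by omega⟩ : ℤ) + (ρ ⟨2 * k, by omega⟩ : ℤ)) -
      (5 * (m : ℚ) - 10) * (ρ ⟨k, by omega⟩ : ℤ)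
  else
    -((m : ℚ) ^ 2 - 3 * m + 6) * ((ρ ⟨0, by omega⟩ : ℤ) + (ρ ⟨2 * k, by omega⟩ : ℤ)) -
      (5 * (m : ℚ) - 12) * (ρ ⟨k, by omega⟩ : ℤ)

/-- Lemma 4.8. -/
theorem ribbon_linear_dependence (k m : ℕ) (hk : 1 ≤ k) (hm : 3 ≤ m) :
    ∃ c₀ c₁ c₂ : ℚ, 0 < c₀ ∧ 0 < c₁ ∧ 0 < c₂ ∧
      ∀ ρ : Fin (2 * k + 1) → ℤ, (∑ i, ρ i) = 0 →
        c₀ * Wminus k m hk ρ + c₁ * W1plus k m hk ρ + c₂ * W2plus k m hk ρ = 0 := by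
  have hM : (3:ℚ) ≤ (m:ℚ) := by exact_mod_cast hm
  have hK : (1:ℚ) ≤ (k:ℚ) := by exact_mod_cast hk
  by_cases ho : Odd m
  · -- m odd
    by_cases h13 : k = 1 ∧ m = 3
    · obtain ⟨hk1, hm3⟩ := h13
      subst hk1; subst hm3
      refine ⟨2, 1, 1, by norm_num, by norm_num, by norm_num, ?_⟩
      intro ρ _
      simp only [Wminus, W1plus, W2plus, if_pos ho]
      ring
    · have hor : 2 ≤ k ∨ 5 ≤ m := by
        obtain ⟨j, hj⟩ := ho
        omega
      have hor' : (2:ℚ) ≤ (k:ℚ) ∨ (5:ℚ) ≤ (m:ℚ) := by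
        rcases hor with h | h
        · exact Or.inl (by exact_mod_cast h)
        · exact Or.inr (by exact_mod_cast h)
      refine ⟨((m:ℚ)-2)*(2*(k:ℚ)*((m:ℚ)-1)-1)*((k:ℚ)*((m:ℚ)-1)-2),
        2*(k:ℚ)*((m:ℚ)-1)*(2*(m:ℚ)-5) - (m:ℚ)^2 + 5,
        (k:ℚ)*((m:ℚ)-1)*((m:ℚ)^2-6*(m:ℚ)+10) - ((m:ℚ)^2-4*(m:ℚ)+5), ?_, ?_, ?_, ?_⟩
      · have h4 : (4:ℚ) ≤ (k:ℚ)*((m:ℚ)-1) := by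
          rcases hor' with h | h
          · nlinarith
          · nlinarith
        have h1 : (0:ℚ) < (m:ℚ) - 2 := by linarith
        have h2 : (0:ℚ) < 2*(k:ℚ)*((m:ℚ)-1) - 1 := by nlinarith
        have h3 : (0:ℚ) < (k:ℚ)*((m:ℚ)-1) - 2 := by linarith
        positivity
      · rcases hor' with h | h
        · nlinarith [sq_nonneg ((m:ℚ)-3), mul_nonneg (sub_nonneg.2 h) (sub_nonneg.2 hM),
            mul_nonneg (mul_nonneg (sub_nonneg.2 h) (by linarith : (0:ℚ) ≤ (m:ℚ)-1)) (by linarith : (0:ℚ) ≤ 2*(m:ℚ)-5)]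
        · nlinarith [mul_nonneg (by linarith : (0:ℚ) ≤ (k:ℚ)-1) (mul_nonneg (by linarith : (0:ℚ) ≤ (m:ℚ)-1) (by linarith : (0:ℚ) ≤ 2*(m:ℚ)-5)),
            mul_nonneg (by linarith : (0:ℚ) ≤ (m:ℚ)-3) (by linarith : (0:ℚ) ≤ 3*(m:ℚ)-5)]
      · rcases hor' with h | h
        · nlinarith [mul_nonneg (by linarith : (0:ℚ) ≤ (k:ℚ)-2) (mul_nonneg (by linarith : (0:ℚ) ≤ (m:ℚ)-1) (by nlinarith [sq_nonneg ((m:ℚ)-3)] : (0:ℚ) ≤ (m:ℚ)^2-6*(m:ℚ)+10)),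
            mul_nonneg (by linarith : (0:ℚ) ≤ (m:ℚ)-3) (sq_nonneg ((m:ℚ)-3)), sq_nonneg ((m:ℚ)-3)]
        · nlinarith [mul_nonneg (by linarith : (0:ℚ) ≤ (k:ℚ)-1) (mul_nonneg (by linarith : (0:ℚ) ≤ (m:ℚ)-1) (by nlinarith [sq_nonneg ((m:ℚ)-3)] : (0:ℚ) ≤ (m:ℚ)^2-6*(m:ℚ)+10)),
            mul_nonneg (by linarith : (0:ℚ) ≤ (m:ℚ)-5) (sq_nonneg ((m:ℚ)-3)), sq_nonneg ((m:ℚ)-4)]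
      · intro ρ _
        simp only [Wminus, W1plus, W2plus, if_pos ho]
        ring
  · -- m even
    have hm4 : 4 ≤ m := by
      rcases Nat.even_or_odd m with he | hodd
      · obtain ⟨j, hj⟩ := he; omega
      · exact absurd hodd ho
    have hM4 : (4:ℚ) ≤ (m:ℚ) := by exact_mod_cast hm4
    refine ⟨((m:ℚ)-2)*(2*(k:ℚ)*((m:ℚ)-1)-1)*((k:ℚ)*((m:ℚ)-1)-2),
      4*(k:ℚ)*((m:ℚ)-1)*((m:ℚ)-3) - (m:ℚ)^2 + 6,
      (k:ℚ)*((m:ℚ)-1)*((m:ℚ)^2-6*(m:ℚ)+12) - ((m:ℚ)^2-4*(m:ℚ)+6), ?_, ?_, ?_, ?_⟩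
    · have h4 : (3:ℚ) ≤ (k:ℚ)*((m:ℚ)-1) := by nlinarith
      have h1 : (0:ℚ) < (m:ℚ) - 2 := by linarith
      have h2 : (0:ℚ) < 2*(k:ℚ)*((m:ℚ)-1) - 1 := by linarith
      have h3 : (0:ℚ) < (k:ℚ)*((m:ℚ)-1) - 2 := by linarith
      positivity
    · nlinarith [mul_nonneg (by linarith : (0:ℚ) ≤ (k:ℚ)-1) (mul_nonneg (by linarith : (0:ℚ) ≤ (m:ℚ)-1) (by linarith : (0:ℚ) ≤ (m:ℚ)-3)),
        mul_nonneg (by linarith : (0:ℚ) ≤ (m:ℚ)-4) (by linarith : (0:ℚ) ≤ 3*(m:ℚ)-4), sq_nonneg ((m:ℚ)-4)]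
    · nlinarith [mul_nonneg (by linarith : (0:ℚ) ≤ (k:ℚ)-1) (mul_nonneg (by linarith : (0:ℚ) ≤ (m:ℚ)-1) (by nlinarith [sq_nonneg ((m:ℚ)-3)] : (0:ℚ) ≤ (m:ℚ)^2-6*(m:ℚ)+12)),
        mul_nonneg (by linarith : (0:ℚ) ≤ (m:ℚ)-4) (sq_nonneg ((m:ℚ)-3)), sq_nonneg ((m:ℚ)-4), sq_nonneg ((m:ℚ)-3)]
    · intro ρ _
      simp only [Wminus, W1plus, W2plus, if_neg ho]
      ring
end

section
/- For every m ≥ 2, the (2m−1)(2k−1) elements ω_j := (u^{j−m}, u^{−j−m}, 0) and η_j := (0, u^{j−m}, u^{−j−m}) for m ≤ j ≤ mk, together with χ_ℓ := (0, u^{ℓ−m}, 0) for −k(m−1)+1 ≤ ℓ ≤ k(m−1)−1, are linearly independent over ℂ and span V_m; in particular dim_ℂ V_m = (2m−1)(2k−1). (Lemma 3.2: the multiplication map Sym^m H⁰(C,ω_C) → H⁰(C,ω_C^m) for the balanced double A_{2k+1}-curve is surjective, with the indicated basis of its image.) -/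
/-!
Lemma 3.2 for the balanced double `A_{2k+1}`-curve of genus `g = 2k`.  We work in
`T = ℂ(u) × ℂ(u) × ℂ(u)` and model the canonical sections as
`x_i = (u^(i-1), u^(-i-1), 0)` and `y_i = (0, u^(i-1), u^(-i-1))` for `1 ≤ i ≤ k`.
The claim: for `m ≥ 2`, the `(2m-1)(2k-1)` elements `ω_j = (u^(j-m), u^(-j-m), 0)` and
`η_j = (0, u^(j-m), u^(-j-m))` for `m ≤ j ≤ mk`, together with
`χ_ℓ = (0, u^(ℓ-m), 0)` for `-k(m-1)+1 ≤ ℓ ≤ k(m-1)-1`, are linearly independent over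
`ℂ` and span `V_m`; in particular `dim V_m = (2m-1)(2k-1)`.
-/

noncomputable section

/-- The field `ℂ(u)` of rational functions. -/
abbrev K : Type := RatFunc ℂ

/-- The product ring `T = ℂ(u) × ℂ(u) × ℂ(u)`. -/
abbrev T3 : Type := K × K × K

/-- `x_i := (u^(i-1), u^(-i-1), 0)`. -/
def xA (i : ℕ) : T3 :=
  (RatFunc.X ^ ((i : ℤ) - 1), RatFunc.X ^ (-(i : ℤ) - 1), 0)

/-- `y_i := (0, u^(i-1), u^(-i-1))`. -/
def yA (i : ℕ) : T3 :=
  (0, RatFunc.X ^ ((i : ℤ) - 1), RatFunc.X ^ (-(i : ℤ) - 1))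

/-- The `2k` variables `x_1,…,x_k,y_1,…,y_k`, indexed by `Fin k ⊕ Fin k`. -/
def varA (k : ℕ) : Fin k ⊕ Fin k → T3 :=
  Sum.elim (fun i => xA ((i : ℕ) + 1)) (fun i => yA ((i : ℕ) + 1))

/-- `V_m`: the `ℂ`-span of all degree-`m` monomials in the variables `x_i, y_i`. -/
def VA (k m : ℕ) : Submodule ℂ T3 :=
  Submodule.span ℂ
    {t : T3 | ∃ σ : Multiset (Fin k ⊕ Fin k), Multiset.card σ = m ∧ t = (σ.map (varA k)).prod}

/-- `ω_j := (u^(j-m), u^(-j-m), 0)`. -/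
def omegaA (m : ℕ) (j : ℕ) : T3 :=
  (RatFunc.X ^ ((j : ℤ) - m), RatFunc.X ^ (-(j : ℤ) - m), 0)

/-- `η_j := (0, u^(j-m), u^(-j-m))`. -/
def etaA (m : ℕ) (j : ℕ) : T3 :=
  (0, RatFunc.X ^ ((j : ℤ) - m), RatFunc.X ^ (-(j : ℤ) - m))

/-- `χ_ℓ := (0, u^(ℓ-m), 0)`. -/
def chiA (m : ℕ) (ℓ : ℤ) : T3 :=
  (0, RatFunc.X ^ (ℓ - (m : ℤ)), 0)

/-- The claimed basis family of `V_m`: `ω_j` and `η_j` for `m ≤ j ≤ mk`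
(`mk - m + 1` members each) and `χ_ℓ` for `-k(m-1)+1 ≤ ℓ ≤ k(m-1)-1`
(`2k(m-1) - 1` members); in total `(2m-1)(2k-1)` elements. -/
def famA (k m : ℕ) :
    (Fin (m * k - m + 1) ⊕ Fin (m * k - m + 1) ⊕ Fin (2 * k * (m - 1) - 1)) → T3 :=
  Sum.elim (fun i => omegaA m (m + (i : ℕ)))
    (Sum.elim (fun i => etaA m (m + (i : ℕ)))
      (fun i => chiA m ((i : ℤ) - ((k : ℤ) * ((m : ℤ) - 1) - 1))))


/-! ### Auxiliary development -/

lemma Xne : (RatFunc.X : K) ≠ 0 := RatFunc.X_ne_zero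

lemma zpow_indep {n : ℕ} (f : Fin n → ℤ) (hf : Function.Injective f) (c : Fin n → ℂ)
    (h : ∑ i, c i • (RatFunc.X : K) ^ (f i) = 0) : ∀ i, c i = 0 := by
  classical
  set M : ℤ := ∑ i, |f i| with hM
  have hMn : ∀ i, 0 ≤ f i + M := by
    intro i
    have h1 : |f i| ≤ M := Finset.single_le_sum (fun j _ => abs_nonneg (f j)) (Finset.mem_univ i)
    have := neg_abs_le (f i)
    linarith
  have h' : ∑ i, c i • (RatFunc.X : K) ^ (f i + M) = 0 := by
    have : ∑ i, c i • (RatFunc.X : K) ^ (f i + M)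
        = (RatFunc.X : K) ^ M * ∑ i, c i • (RatFunc.X : K) ^ (f i) := by
      rw [Finset.mul_sum]
      refine Finset.sum_congr rfl fun i _ => ?_
      rw [mul_smul_comm, ← zpow_add₀ Xne]
      ring_nf
    rw [this, h, mul_zero]
  set F : Fin n → ℕ := fun i => (f i + M).toNat with hF
  have hFinj : Function.Injective F := by
    intro a b hab
    apply hf
    have := congrArg (fun t : ℕ => (t : ℤ)) hab
    simp only [hF, Int.toNat_of_nonneg (hMn _)] at this
    omega
  have hcoe : ∀ i, (RatFunc.X : K) ^ (f i + M)
      = algebraMap (Polynomial ℂ) K (Polynomial.X ^ F i) := by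
    intro i
    rw [map_pow, RatFunc.algebraMap_X, ← zpow_natCast, hF]
    simp [Int.toNat_of_nonneg (hMn i)]
  have hb : LinearIndependent ℂ (fun s : ℕ => (Polynomial.X : Polynomial ℂ) ^ s) := by
    have := (Polynomial.basisMonomials ℂ).linearIndependent
    simpa [Polynomial.X_pow_eq_monomial] using this
  have hmap : LinearIndependent ℂ
      (fun s : ℕ => algebraMap (Polynomial ℂ) K (Polynomial.X ^ s)) := by
    have := hb.map' (IsScalarTower.toAlgHom ℂ (Polynomial ℂ) K).toLinearMap
      (LinearMap.ker_eq_bot.mpr (IsFractionRing.injective (Polynomial ℂ) K))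
    exact this
  have hli : LinearIndependent ℂ (fun i : Fin n => (RatFunc.X : K) ^ (f i + M)) := by
    rw [funext hcoe]
    exact hmap.comp F hFinj
  exact Fintype.linearIndependent_iff.mp hli c h'

lemma Xzp (a b c : ℤ) (h : a + b = c) :
    (RatFunc.X : K) ^ a * RatFunc.X ^ b = RatFunc.X ^ c := by
  rw [← zpow_add₀ Xne, h]

lemma xA_omegaA (i m j : ℕ) : xA i * omegaA m j = omegaA (m + 1) (i + j) := by
  simp only [xA, omegaA, Prod.mk_mul_mk, mul_zero]
  refine congrArg₂ _ (Xzp _ _ _ (by push_cast; ring))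
    (congrArg₂ _ (Xzp _ _ _ (by push_cast; ring)) rfl)

lemma yA_etaA (i m j : ℕ) : yA i * etaA m j = etaA (m + 1) (i + j) := by
  simp only [yA, etaA, Prod.mk_mul_mk, mul_zero, zero_mul]
  refine congrArg₂ _ rfl
    (congrArg₂ _ (Xzp _ _ _ (by push_cast; ring)) (Xzp _ _ _ (by push_cast; ring)))

lemma xA_etaA (i m j : ℕ) : xA i * etaA m j = chiA (m + 1) ((j : ℤ) - i) := by
  simp only [xA, etaA, chiA, Prod.mk_mul_mk, mul_zero, zero_mul]
  refine congrArg₂ _ rfl (congrArg₂ _ (Xzp _ _ _ (by push_cast; ring)) rfl)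

lemma yA_omegaA (i m j : ℕ) : yA i * omegaA m j = chiA (m + 1) ((i : ℤ) - j) := by
  simp only [yA, omegaA, chiA, Prod.mk_mul_mk, mul_zero, zero_mul]
  refine congrArg₂ _ rfl (congrArg₂ _ (Xzp _ _ _ (by push_cast; ring)) rfl)

lemma xA_chiA (i m : ℕ) (ℓ : ℤ) : xA i * chiA m ℓ = chiA (m + 1) (ℓ - i) := by
  simp only [xA, chiA, Prod.mk_mul_mk, mul_zero, zero_mul]
  refine congrArg₂ _ rfl (congrArg₂ _ (Xzp _ _ _ (by push_cast; ring)) rfl)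

lemma yA_chiA (i m : ℕ) (ℓ : ℤ) : yA i * chiA m ℓ = chiA (m + 1) (ℓ + i) := by
  simp only [yA, chiA, Prod.mk_mul_mk, mul_zero, zero_mul]
  refine congrArg₂ _ rfl (congrArg₂ _ (Xzp _ _ _ (by push_cast; ring)) rfl)

lemma xA_eq_omegaA (i : ℕ) : xA i = omegaA 1 i := by
  simp only [xA, omegaA, Nat.cast_one]

lemma yA_eq_etaA (i : ℕ) : yA i = etaA 1 i := by
  simp only [yA, etaA, Nat.cast_one]

lemma xA_yA (i j : ℕ) : xA i * yA j = chiA 2 ((j : ℤ) - i) := by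
  rw [yA_eq_etaA, xA_etaA]

section MultisetWeights

variable {k : ℕ}

def sxA (σ : Multiset (Fin k ⊕ Fin k)) : ℕ :=
  (σ.map (Sum.elim (fun i : Fin k => (i : ℕ) + 1) (fun _ : Fin k => 0))).sum
def syA (σ : Multiset (Fin k ⊕ Fin k)) : ℕ :=
  (σ.map (Sum.elim (fun _ : Fin k => 0) (fun i : Fin k => (i : ℕ) + 1))).sum
def cLA (σ : Multiset (Fin k ⊕ Fin k)) : ℕ :=
  (σ.map (Sum.elim (fun _ : Fin k => 1) (fun _ : Fin k => 0))).sum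
def cRA (σ : Multiset (Fin k ⊕ Fin k)) : ℕ :=
  (σ.map (Sum.elim (fun _ : Fin k => 0) (fun _ : Fin k => 1))).sum

@[simp] lemma sxA_consL (i : Fin k) (σ) : sxA (Sum.inl i ::ₘ σ) = (i : ℕ) + 1 + sxA σ := by
  simp [sxA]
@[simp] lemma sxA_consR (i : Fin k) (σ) : sxA (Sum.inr i ::ₘ σ) = sxA σ := by simp [sxA]
@[simp] lemma syA_consL (i : Fin k) (σ) : syA (Sum.inl i ::ₘ σ) = syA σ := by simp [syA]
@[simp] lemma syA_consR (i : Fin k) (σ) : syA (Sum.inr i ::ₘ σ) = (i : ℕ) + 1 + syA σ := by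
  simp [syA]
@[simp] lemma cLA_consL (i : Fin k) (σ) : cLA (Sum.inl i ::ₘ σ) = 1 + cLA σ := by simp [cLA]
@[simp] lemma cLA_consR (i : Fin k) (σ) : cLA (Sum.inr i ::ₘ σ) = cLA σ := by simp [cLA]
@[simp] lemma cRA_consL (i : Fin k) (σ) : cRA (Sum.inl i ::ₘ σ) = cRA σ := by simp [cRA]
@[simp] lemma cRA_consR (i : Fin k) (σ) : cRA (Sum.inr i ::ₘ σ) = 1 + cRA σ := by simp [cRA]
@[simp] lemma sxA_zero : sxA (0 : Multiset (Fin k ⊕ Fin k)) = 0 := by simp [sxA]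
@[simp] lemma syA_zero : syA (0 : Multiset (Fin k ⊕ Fin k)) = 0 := by simp [syA]
@[simp] lemma cLA_zero : cLA (0 : Multiset (Fin k ⊕ Fin k)) = 0 := by simp [cLA]
@[simp] lemma cRA_zero : cRA (0 : Multiset (Fin k ⊕ Fin k)) = 0 := by simp [cRA]

lemma card_eq_cLA_add_cRA (σ : Multiset (Fin k ⊕ Fin k)) :
    Multiset.card σ = cLA σ + cRA σ := by
  induction σ using Multiset.induction_on with
  | empty => simp
  | cons z σ ih => rcases z with i | i <;> simp [ih] <;> omega

lemma sxA_bounds (σ : Multiset (Fin k ⊕ Fin k)) :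
    cLA σ ≤ sxA σ ∧ sxA σ ≤ k * cLA σ := by
  induction σ using Multiset.induction_on with
  | empty => simp
  | cons z σ ih =>
    rcases z with i | i
    · have hik : (i : ℕ) + 1 ≤ k := i.isLt
      have : k * (1 + cLA σ) = k + k * cLA σ := by ring
      constructor <;> simp only [sxA_consL, cLA_consL, this] <;> omega
    · simpa using ih

lemma syA_bounds (σ : Multiset (Fin k ⊕ Fin k)) :
    cRA σ ≤ syA σ ∧ syA σ ≤ k * cRA σ := by
  induction σ using Multiset.induction_on with
  | empty => simp
  | cons z σ ih =>
    rcases z with i | i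
    · simpa using ih
    · have hik : (i : ℕ) + 1 ≤ k := i.isLt
      have : k * (1 + cRA σ) = k + k * cRA σ := by ring
      constructor <;> simp only [syA_consR, cRA_consR, this] <;> omega

set_option linter.unreachableTactic false in
set_option linter.unnecessarySeqFocus false in
set_option linter.unusedTactic false in
lemma prod_form (σ : Multiset (Fin k ⊕ Fin k)) (hσ : σ ≠ 0) :
    (cRA σ = 0 ∧ (σ.map (varA k)).prod = omegaA (Multiset.card σ) (sxA σ)) ∨
    (cLA σ = 0 ∧ (σ.map (varA k)).prod = etaA (Multiset.card σ) (syA σ)) ∨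
    (1 ≤ cLA σ ∧ 1 ≤ cRA σ ∧
      (σ.map (varA k)).prod = chiA (Multiset.card σ) ((syA σ : ℤ) - (sxA σ : ℤ))) := by
  induction σ using Multiset.induction_on with
  | empty => exact absurd rfl hσ
  | cons z σ ih =>
    have hvL : ∀ i : Fin k, varA k (Sum.inl i) = xA ((i : ℕ) + 1) := fun _ => rfl
    have hvR : ∀ i : Fin k, varA k (Sum.inr i) = yA ((i : ℕ) + 1) := fun _ => rfl
    rcases eq_or_ne σ 0 with rfl | hσ'
    · rcases z with i | i
      · left
        refine ⟨by simp [cRA], ?_⟩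
        rw [Multiset.map_cons, Multiset.map_zero, Multiset.prod_cons, Multiset.prod_zero,
          mul_one, hvL, xA_eq_omegaA]
        simp [sxA]
      · right; left
        refine ⟨by simp [cLA], ?_⟩
        rw [Multiset.map_cons, Multiset.map_zero, Multiset.prod_cons, Multiset.prod_zero,
          mul_one, hvR, yA_eq_etaA]
        simp [syA]
    · have hc : 1 ≤ Multiset.card σ := Multiset.card_pos.mpr hσ'
      have hcard := card_eq_cLA_add_cRA σ
      rcases ih hσ' with ⟨h0, hp⟩ | ⟨h0, hp⟩ | ⟨h1, h2, hp⟩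
      · -- σ all left
        have hcy : syA σ = 0 := by
          have h3 := (syA_bounds σ).2
          rw [h0, Nat.mul_zero] at h3; omega
        rcases z with i | i
        · left
          refine ⟨by simpa using h0, ?_⟩
          rw [Multiset.map_cons, Multiset.prod_cons, hvL, hp, xA_omegaA]
          simp
        · right; right
          refine ⟨by simp <;> omega, by simp, ?_⟩
          rw [Multiset.map_cons, Multiset.prod_cons, hvR, hp, yA_omegaA]
          rw [Multiset.card_cons, sxA_consR, syA_consR, hcy]
          all_goals try (congr 1 <;> (push_cast; try ring))
      · -- σ all right
        have hcx : sxA σ = 0 := by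
          have h3 := (sxA_bounds σ).2
          rw [h0, Nat.mul_zero] at h3; omega
        rcases z with i | i
        · right; right
          refine ⟨by simp, by simp <;> omega, ?_⟩
          rw [Multiset.map_cons, Multiset.prod_cons, hvL, hp, xA_etaA]
          rw [Multiset.card_cons, sxA_consL, syA_consL, hcx]
          all_goals try (congr 1 <;> (push_cast; try ring))
        · right; left
          refine ⟨by simpa using h0, ?_⟩
          rw [Multiset.map_cons, Multiset.prod_cons, hvR, hp, yA_etaA]
          simp
      · -- mixed
        right; right
        rcases z with i | i
        · refine ⟨by simp <;> omega, by simpa using h2, ?_⟩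
          rw [Multiset.map_cons, Multiset.prod_cons, hvL, hp, xA_chiA]
          rw [Multiset.card_cons, sxA_consL, syA_consL]
          all_goals try (congr 1 <;> (push_cast; try ring))
        · refine ⟨by simpa using h1, by simp <;> omega, ?_⟩
          rw [Multiset.map_cons, Multiset.prod_cons, hvR, hp, yA_chiA]
          rw [Multiset.card_cons, sxA_consR, syA_consR]
          all_goals try (congr 1 <;> (push_cast; try ring))

lemma exists_omega (hk : 1 ≤ k) : ∀ m, 1 ≤ m → ∀ j, m ≤ j → j ≤ m * k →
    ∃ σ : Multiset (Fin k ⊕ Fin k), Multiset.card σ = m ∧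
      (σ.map (varA k)).prod = omegaA m j := by
  intro m hm
  induction m, hm using Nat.le_induction with
  | base =>
    intro j hj1 hj2
    rw [one_mul] at hj2
    refine ⟨{Sum.inl ⟨j - 1, by omega⟩}, by simp, ?_⟩
    have : varA k (Sum.inl ⟨j - 1, by omega⟩) = xA j := by
      show xA (j - 1 + 1) = xA j
      congr 1; omega
    simp [this, xA_eq_omegaA]
  | succ m hm ih =>
    intro j hj1 hj2
    have hmk : m ≤ m * k := Nat.le_mul_of_pos_right m (by omega)
    have hsk : (m + 1) * k = m * k + k := by ring
    rw [hsk] at hj2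
    rcases le_or_gt j (m * k + 1) with hle | hgt
    · obtain ⟨σ, hc, hp⟩ := ih (j - 1) (by omega) (by omega)
      refine ⟨Sum.inl ⟨0, by omega⟩ ::ₘ σ, by simp [hc], ?_⟩
      rw [Multiset.map_cons, Multiset.prod_cons]
      have hv : varA k (Sum.inl ⟨0, by omega⟩) = xA 1 := rfl
      rw [hv, hp, xA_omegaA]
      congr 1; omega
    · have hik : j - m * k ≤ k := by omega
      obtain ⟨σ, hc, hp⟩ := ih (m * k) (by omega) (by omega)
      refine ⟨Sum.inl ⟨j - m * k - 1, by omega⟩ ::ₘ σ, by simp [hc], ?_⟩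
      rw [Multiset.map_cons, Multiset.prod_cons]
      have hv : varA k (Sum.inl ⟨j - m * k - 1, by omega⟩) = xA (j - m * k) := by
        show xA (j - m * k - 1 + 1) = xA (j - m * k)
        congr 1; omega
      rw [hv, hp, xA_omegaA]
      congr 1; omega

lemma exists_eta (hk : 1 ≤ k) : ∀ m, 1 ≤ m → ∀ j, m ≤ j → j ≤ m * k →
    ∃ σ : Multiset (Fin k ⊕ Fin k), Multiset.card σ = m ∧
      (σ.map (varA k)).prod = etaA m j := by
  intro m hm
  induction m, hm using Nat.le_induction with
  | base =>
    intro j hj1 hj2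
    rw [one_mul] at hj2
    refine ⟨{Sum.inr ⟨j - 1, by omega⟩}, by simp, ?_⟩
    have : varA k (Sum.inr ⟨j - 1, by omega⟩) = yA j := by
      show yA (j - 1 + 1) = yA j
      congr 1; omega
    simp [this, yA_eq_etaA]
  | succ m hm ih =>
    intro j hj1 hj2
    have hmk : m ≤ m * k := Nat.le_mul_of_pos_right m (by omega)
    have hsk : (m + 1) * k = m * k + k := by ring
    rw [hsk] at hj2
    rcases le_or_gt j (m * k + 1) with hle | hgt
    · obtain ⟨σ, hc, hp⟩ := ih (j - 1) (by omega) (by omega)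
      refine ⟨Sum.inr ⟨0, by omega⟩ ::ₘ σ, by simp [hc], ?_⟩
      rw [Multiset.map_cons, Multiset.prod_cons]
      have hv : varA k (Sum.inr ⟨0, by omega⟩) = yA 1 := rfl
      rw [hv, hp, yA_etaA]
      congr 1; omega
    · obtain ⟨σ, hc, hp⟩ := ih (m * k) (by omega) (by omega)
      refine ⟨Sum.inr ⟨j - m * k - 1, by omega⟩ ::ₘ σ, by simp [hc], ?_⟩
      rw [Multiset.map_cons, Multiset.prod_cons]
      have hv : varA k (Sum.inr ⟨j - m * k - 1, by omega⟩) = yA (j - m * k) := by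
        show yA (j - m * k - 1 + 1) = yA (j - m * k)
        congr 1; omega
      rw [hv, hp, yA_etaA]
      congr 1; omega

set_option linter.unusedTactic false in
lemma exists_chi (hk : 2 ≤ k) : ∀ m : ℕ, 2 ≤ m → ∀ ℓ : ℤ,
    -((k : ℤ) * ((m : ℤ) - 1) - 1) ≤ ℓ → ℓ ≤ (k : ℤ) * ((m : ℤ) - 1) - 1 →
    ∃ σ : Multiset (Fin k ⊕ Fin k), Multiset.card σ = m ∧
      (σ.map (varA k)).prod = chiA m ℓ := by
  intro m hm
  induction m, hm using Nat.le_induction with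
  | base =>
    intro ℓ hl1 hl2
    push_cast at hl1 hl2
    have hb1 : -((k : ℤ) - 1) ≤ ℓ := by linarith
    have hb2 : ℓ ≤ (k : ℤ) - 1 := by linarith
    rcases le_or_gt 0 ℓ with hpos | hneg
    · refine ⟨{Sum.inl ⟨0, by omega⟩, Sum.inr ⟨ℓ.toNat, by omega⟩}, by simp, ?_⟩
      have hv1 : varA k (Sum.inl (⟨0, by omega⟩ : Fin k)) = xA 1 := rfl
      have hv2 : varA k (Sum.inr (⟨ℓ.toNat, by omega⟩ : Fin k)) = yA (ℓ.toNat + 1) := rfl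
      rw [Multiset.insert_eq_cons, Multiset.map_cons, Multiset.prod_cons,
        Multiset.map_singleton, Multiset.prod_singleton, hv1, hv2, xA_yA]
      congr 1
      push_cast [Int.toNat_of_nonneg hpos]; ring
    · refine ⟨{Sum.inl ⟨(-ℓ).toNat, by omega⟩, Sum.inr ⟨0, by omega⟩}, by simp, ?_⟩
      have hv1 : varA k (Sum.inl (⟨(-ℓ).toNat, by omega⟩ : Fin k)) = xA ((-ℓ).toNat + 1) := rfl
      have hv2 : varA k (Sum.inr (⟨0, by omega⟩ : Fin k)) = yA 1 := rfl
      rw [Multiset.insert_eq_cons, Multiset.map_cons, Multiset.prod_cons,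
        Multiset.map_singleton, Multiset.prod_singleton, hv1, hv2, xA_yA]
      congr 1
      have : ((-ℓ).toNat : ℤ) = -ℓ := Int.toNat_of_nonneg (by omega)
      push_cast [this]; ring
  | succ m hm ih =>
    intro ℓ hl1 hl2
    obtain ⟨A, hA2, hkA, hl1', hl2', hstep⟩ :
        ∃ A : ℤ, 2 ≤ A ∧ (k : ℤ) ≤ A ∧ -(A + k - 1) ≤ ℓ ∧ ℓ ≤ A + k - 1 ∧
          (∀ ℓ' : ℤ, -(A - 1) ≤ ℓ' → ℓ' ≤ A - 1 →
            ∃ σ : Multiset (Fin k ⊕ Fin k), Multiset.card σ = m ∧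
              (σ.map (varA k)).prod = chiA m ℓ') := by
      refine ⟨(k : ℤ) * ((m : ℤ) - 1), ?_, ?_, ?_, ?_, ih⟩
      · have h1 : (1 : ℤ) ≤ (m : ℤ) - 1 := by push_cast; omega
        have h2 : (2 : ℤ) ≤ (k : ℤ) := by exact_mod_cast hk
        nlinarith
      · have h1 : (1 : ℤ) ≤ (m : ℤ) - 1 := by push_cast; omega
        have h2 : (0 : ℤ) ≤ (k : ℤ) := by positivity
        nlinarith
      · have he : (k : ℤ) * (((m : ℕ) + 1 : ℤ) - 1) = (k : ℤ) * ((m : ℤ) - 1) + k := by ring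
        push_cast at hl1 ⊢
        linarith [hl1, he]
      · have he : (k : ℤ) * (((m : ℕ) + 1 : ℤ) - 1) = (k : ℤ) * ((m : ℤ) - 1) + k := by ring
        push_cast at hl2 ⊢
        linarith [hl2, he]
    by_cases h1 : A ≤ ℓ
    · obtain ⟨σ, hc, hp⟩ := hstep (ℓ - k) (by omega) (by omega)
      refine ⟨Sum.inr ⟨k - 1, by omega⟩ ::ₘ σ, by simp [hc], ?_⟩
      rw [Multiset.map_cons, Multiset.prod_cons]
      have hv : varA k (Sum.inr (⟨k - 1, by omega⟩ : Fin k)) = yA (k - 1 + 1) := rfl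
      rw [hv, hp, yA_chiA]
      congr 1
      have : ((k - 1 + 1 : ℕ) : ℤ) = (k : ℤ) := by omega
      rw [this]; ring
    · by_cases h2 : ℓ ≤ -A
      · obtain ⟨σ, hc, hp⟩ := hstep (ℓ + k) (by omega) (by omega)
        refine ⟨Sum.inl ⟨k - 1, by omega⟩ ::ₘ σ, by simp [hc], ?_⟩
        rw [Multiset.map_cons, Multiset.prod_cons]
        have hv : varA k (Sum.inl (⟨k - 1, by omega⟩ : Fin k)) = xA (k - 1 + 1) := rfl
        rw [hv, hp, xA_chiA]
        congr 1
        have : ((k - 1 + 1 : ℕ) : ℤ) = (k : ℤ) := by omega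
        rw [this]; ring
      · by_cases h3 : ℓ ≤ 0
        · obtain ⟨σ, hc, hp⟩ := hstep (ℓ + 1) (by omega) (by omega)
          refine ⟨Sum.inl ⟨0, by omega⟩ ::ₘ σ, by simp [hc], ?_⟩
          rw [Multiset.map_cons, Multiset.prod_cons]
          have hv : varA k (Sum.inl (⟨0, by omega⟩ : Fin k)) = xA 1 := rfl
          rw [hv, hp, xA_chiA]
          congr 1
          push_cast; ring
        · obtain ⟨σ, hc, hp⟩ := hstep (ℓ - 1) (by omega) (by omega)
          refine ⟨Sum.inr ⟨0, by omega⟩ ::ₘ σ, by simp [hc], ?_⟩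
          rw [Multiset.map_cons, Multiset.prod_cons]
          have hv : varA k (Sum.inr (⟨0, by omega⟩ : Fin k)) = yA 1 := rfl
          rw [hv, hp, yA_chiA]
          congr 1
          push_cast; ring

end MultisetWeights

@[simp] lemma fst_sum'' {N : ℕ} (v : Fin N → T3) : (∑ a, v a).1 = ∑ a, (v a).1 :=
  map_sum (LinearMap.fst ℂ K (K × K)) v Finset.univ
@[simp] lemma snd1_sum'' {N : ℕ} (v : Fin N → T3) : (∑ a, v a).2.1 = ∑ a, (v a).2.1 :=
  map_sum ((LinearMap.fst ℂ K K).comp (LinearMap.snd ℂ K (K × K))) v Finset.univ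
@[simp] lemma snd2_sum'' {N : ℕ} (v : Fin N → T3) : (∑ a, v a).2.2 = ∑ a, (v a).2.2 :=
  map_sum ((LinearMap.snd ℂ K K).comp (LinearMap.snd ℂ K (K × K))) v Finset.univ

set_option maxHeartbeats 1000000 in
/-- Lemma 3.2. -/
theorem doubleA_pluricanonical_basis (k m : ℕ) (hk : 2 ≤ k) (hm : 2 ≤ m) :
    LinearIndependent ℂ (famA k m) ∧
    Submodule.span ℂ (Set.range (famA k m)) = VA k m ∧
    Module.finrank ℂ ↥(VA k m) = (2 * m - 1) * (2 * k - 1) := by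

  have hk1 : 1 ≤ k := by omega
  have hm1 : 1 ≤ m := by omega
  have hmk : m ≤ m * k := Nat.le_mul_of_pos_right m (by omega)
  have hkm : k ≤ k * m := Nat.le_mul_of_pos_right k (by omega)
  have h4 : 4 ≤ 2 * k * (m - 1) := by
    calc (4 : ℕ) = 2 * 2 * 1 := by norm_num
    _ ≤ 2 * k * (m - 1) := Nat.mul_le_mul (Nat.mul_le_mul_left 2 hk) (by omega)
  -- linear independence
  have hind : LinearIndependent ℂ (famA k m) := by
    rw [Fintype.linearIndependent_iff]
    intro g h
    rw [Fintype.sum_sum_type, Fintype.sum_sum_type] at h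
    have h1 := congrArg Prod.fst h
    simp only [Prod.fst_add, fst_sum'', Prod.smul_fst, famA, Sum.elim_inl, Sum.elim_inr,
      omegaA, etaA, chiA, smul_zero, Finset.sum_const_zero, add_zero, Prod.fst_zero] at h1
    have hz1 := zpow_indep _ (fun a b hab => by
      have : (a : ℕ) = (b : ℕ) := by omega
      exact Fin.val_injective this) _ h1
    have h3 := congrArg (fun t : T3 => t.2.2) h
    simp only [Prod.snd_add, snd2_sum'', Prod.smul_snd, Prod.snd_zero, famA, Sum.elim_inl,
      Sum.elim_inr, omegaA, etaA, chiA, smul_zero, Finset.sum_const_zero, add_zero,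
      zero_add] at h3
    have hz3 := zpow_indep _ (fun a b hab => by
      have : (a : ℕ) = (b : ℕ) := by omega
      exact Fin.val_injective this) _ h3
    have h2 := congrArg (fun t : T3 => t.2.1) h
    simp only [Prod.snd_add, Prod.fst_add, snd1_sum'', Prod.smul_snd, Prod.smul_fst,
      Prod.snd_zero, Prod.fst_zero, famA, Sum.elim_inl, Sum.elim_inr, omegaA, etaA, chiA,
      hz1, hz3, zero_smul, Finset.sum_const_zero, zero_add, add_zero] at h2
    have hz2 := zpow_indep _ (fun a b hab => by
      have : (a : ℕ) = (b : ℕ) := by omega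
      exact Fin.val_injective this) _ h2
    intro i
    rcases i with a | b | c
    · exact hz1 a
    · exact hz3 b
    · exact hz2 c
  -- span
  have hspan : Submodule.span ℂ (Set.range (famA k m)) = VA k m := by
    apply le_antisymm
    · rw [Submodule.span_le]
      rintro t ⟨i, rfl⟩
      rcases i with a | b | c
      · obtain ⟨σ, hc, hp⟩ := exists_omega hk1 m hm1 (m + (a : ℕ)) (by omega) (by
          have := a.isLt
          have h' : (a : ℕ) ≤ m * k - m := by omega
          omega)
        exact Submodule.subset_span ⟨σ, hc, hp.symm⟩
      · obtain ⟨σ, hc, hp⟩ := exists_eta hk1 m hm1 (m + (b : ℕ)) (by omega) (by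
          have := b.isLt
          have h' : (b : ℕ) ≤ m * k - m := by omega
          omega)
        exact Submodule.subset_span ⟨σ, hc, hp.symm⟩
      · obtain ⟨A, hA⟩ : ∃ A : ℤ, A = (k : ℤ) * ((m : ℤ) - 1) := ⟨_, rfl⟩
        have hA2 : 2 ≤ A := by
          rw [hA]
          have h1 : (1 : ℤ) ≤ (m : ℤ) - 1 := by push_cast; omega
          have h2 : (2 : ℤ) ≤ (k : ℤ) := by exact_mod_cast hk
          nlinarith
        have hcast : ((2 * k * (m - 1) - 1 : ℕ) : ℤ) = 2 * A - 1 := by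
          rw [Nat.cast_sub (by omega : 1 ≤ 2 * k * (m - 1)), Nat.cast_mul, Nat.cast_mul,
            Nat.cast_sub hm1, hA]
          push_cast; ring
        have hcb : ((c : ℕ) : ℤ) < 2 * A - 1 := by
          rw [← hcast]; exact_mod_cast c.isLt
        obtain ⟨σ, hc, hp⟩ := exists_chi hk m hm ((c : ℤ) - ((k : ℤ) * ((m : ℤ) - 1) - 1))
          (by rw [← hA]; omega) (by rw [← hA]; omega)
        exact Submodule.subset_span ⟨σ, hc, hp.symm⟩
    · rw [VA, Submodule.span_le]
      rintro t ⟨σ, hcard, rfl⟩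
      have hσ0 : σ ≠ 0 := by
        intro h0
        rw [h0] at hcard
        simp at hcard
        omega
      have hcc := card_eq_cLA_add_cRA σ
      have hsx := sxA_bounds σ
      have hsy := syA_bounds σ
      rcases prod_form σ hσ0 with ⟨h0, hp⟩ | ⟨h0, hp⟩ | ⟨ha, hb, hp⟩
      · rw [hp, hcard]
        have hcl : cLA σ = m := by omega
        have hub : sxA σ ≤ m * k := by
          rw [mul_comm]
          calc sxA σ ≤ k * cLA σ := hsx.2
          _ = k * m := by rw [hcl]
        have hlb : m ≤ sxA σ := hcl ▸ hsx.1
        refine Submodule.subset_span ⟨Sum.inl ⟨sxA σ - m, Nat.lt_succ_of_le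
          (Nat.sub_le_sub_right hub m)⟩, ?_⟩
        show omegaA m (m + (sxA σ - m)) = omegaA m (sxA σ)
        congr 1
        omega
      · rw [hp, hcard]
        have hcl : cRA σ = m := by omega
        have hub : syA σ ≤ m * k := by
          rw [mul_comm]
          calc syA σ ≤ k * cRA σ := hsy.2
          _ = k * m := by rw [hcl]
        have hlb : m ≤ syA σ := hcl ▸ hsy.1
        refine Submodule.subset_span ⟨Sum.inr (Sum.inl ⟨syA σ - m, Nat.lt_succ_of_le
          (Nat.sub_le_sub_right hub m)⟩), ?_⟩
        show etaA m (m + (syA σ - m)) = etaA m (syA σ)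
        congr 1
        omega
      · rw [hp, hcard]
        obtain ⟨A, hA⟩ : ∃ A : ℤ, A = (k : ℤ) * ((m : ℤ) - 1) := ⟨_, rfl⟩
        set ℓ : ℤ := (syA σ : ℤ) - (sxA σ : ℤ) with hldef
        -- ℤ versions of the bounds
        have hka : (k : ℤ) * (cLA σ : ℤ) + (k : ℤ) * (cRA σ : ℤ) = (k : ℤ) * (m : ℤ) := by
          rw [← mul_add]
          congr 1
          push_cast
          omega
        have hsx1 : (cLA σ : ℤ) ≤ (sxA σ : ℤ) := by exact_mod_cast hsx.1
        have hsx2 : (sxA σ : ℤ) ≤ (k : ℤ) * (cLA σ : ℤ) := by exact_mod_cast hsx.2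
        have hsy1 : (cRA σ : ℤ) ≤ (syA σ : ℤ) := by exact_mod_cast hsy.1
        have hsy2 : (syA σ : ℤ) ≤ (k : ℤ) * (cRA σ : ℤ) := by exact_mod_cast hsy.2
        have ha' : (1 : ℤ) ≤ (cLA σ : ℤ) := by exact_mod_cast ha
        have hb' : (1 : ℤ) ≤ (cRA σ : ℤ) := by exact_mod_cast hb
        have hk' : (2 : ℤ) ≤ (k : ℤ) := by exact_mod_cast hk
        have keyA : 0 ≤ ((cLA σ : ℤ) - 1) * ((k : ℤ) + 1) :=
          mul_nonneg (by linarith) (by linarith)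
        have keyB : 0 ≤ ((cRA σ : ℤ) - 1) * ((k : ℤ) + 1) :=
          mul_nonneg (by linarith) (by linarith)
        have hub : ℓ ≤ A - 1 := by
          rw [hA, hldef]
          nlinarith [hka, hsy2, hsx1, keyA]
        have hlb : -(A - 1) ≤ ℓ := by
          rw [hA, hldef]
          nlinarith [hka, hsx2, hsy1, keyB]
        have hA2 : 2 ≤ A := by
          rw [hA]
          have h1 : (1 : ℤ) ≤ (m : ℤ) - 1 := by push_cast; omega
          nlinarith
        have hcast : ((2 * k * (m - 1) - 1 : ℕ) : ℤ) = 2 * A - 1 := by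
          rw [Nat.cast_sub (by omega : 1 ≤ 2 * k * (m - 1)), Nat.cast_mul, Nat.cast_mul,
            Nat.cast_sub hm1, hA]
          push_cast; ring
        have hfin : (ℓ + (A - 1)).toNat < 2 * k * (m - 1) - 1 := by
          generalize hN : 2 * k * (m - 1) - 1 = N at hcast ⊢
          omega
        refine Submodule.subset_span ⟨Sum.inr (Sum.inr ⟨(ℓ + (A - 1)).toNat, hfin⟩), ?_⟩
        show chiA m (((ℓ + (A - 1)).toNat : ℤ) - ((k : ℤ) * ((m : ℤ) - 1) - 1)) = chiA m ℓ
        rw [← hA]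
        congr 1
        omega
  refine ⟨hind, hspan, ?_⟩
  rw [← hspan, finrank_span_eq_card hind]
  simp only [Fintype.card_sum, Fintype.card_fin]
  zify [hmk, (by omega : 1 ≤ 2 * k * (m - 1)), hm1, (by omega : 1 ≤ 2 * m),
    (by omega : 1 ≤ 2 * k)]
  ring
end
end
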